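/- arXiv:1301.1481 — 6 statements merged into one kernel-verified Lean document; each statement's English description precedes it below -/
import Mathlib

section
/- Let (b_n)_{n≥1} be a probability distribution on the positive integers with b_1 ≥ b > 0, and set c_l = Σ_{j>l} b_j and c(1) = Σ_{l≥0} c_l = Σ_{n≥1} n b_n < ∞. Let α = (c(1) − 1)/(1 − b). Then for every integer l ≥ 1, c_l · |1 − e^{iπ/(l+1)}|^{-1} ≤ (1 − b) · |1 − e^{iπ/(1+α)}|^{-1}. -/
open Complex Real

lemma my_abs_one_sub_exp (θ : ℝ) (h0 : 0 ≤ θ) (h2 : θ ≤ 2 * π) :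
    ‖1 - Complex.exp ((θ : ℂ) * Complex.I)‖ = 2 * Real.sin (θ / 2) := by
  rw [Complex.norm_def, Complex.normSq_apply]
  simp only [Complex.sub_re, Complex.sub_im, Complex.one_re, Complex.one_im,
    Complex.exp_ofReal_mul_I_re, Complex.exp_ofReal_mul_I_im]
  have hθ2 : Real.cos θ = 1 - 2 * Real.sin (θ / 2) ^ 2 := by
    have h1 : Real.cos (2 * (θ / 2)) = 2 * Real.cos (θ / 2) ^ 2 - 1 := Real.cos_two_mul _
    have h3 : Real.sin (θ / 2) ^ 2 + Real.cos (θ / 2) ^ 2 = 1 := Real.sin_sq_add_cos_sq _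
    have h4 : 2 * (θ / 2) = θ := by ring
    rw [h4] at h1
    linarith
  have hsin : 0 ≤ Real.sin (θ / 2) :=
    Real.sin_nonneg_of_nonneg_of_le_pi (by linarith) (by linarith)
  have key : (1 - Real.cos θ) * (1 - Real.cos θ) + (0 - Real.sin θ) * (0 - Real.sin θ)
      = (2 * Real.sin (θ / 2)) ^ 2 := by
    have h3 : Real.sin θ ^ 2 + Real.cos θ ^ 2 = 1 := Real.sin_sq_add_cos_sq _
    nlinarith [h3, hθ2]
  rw [key, Real.sqrt_sq (by linarith)]

lemma my_sin_mul_ge (t x : ℝ) (ht0 : 0 ≤ t) (ht1 : t ≤ 1) (hx0 : 0 ≤ x) (hxpi : x ≤ π) :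
    t * Real.sin x ≤ Real.sin (t * x) := by
  have h : t • Real.sin x + (1 - t) • Real.sin 0 ≤ Real.sin (t • x + (1 - t) • (0 : ℝ)) :=
    strictConcaveOn_sin_Icc.concaveOn.2 ⟨hx0, hxpi⟩ ⟨le_rfl, Real.pi_pos.le⟩ ht0
      (by linarith) (by ring)
  simpa using h

set_option maxHeartbeats 1000000 in
theorem stmt_2 (b : ℕ → ℝ) (b0 : ℝ) (hb0pos : 0 < b0) (hzero : b 0 = 0)
    (hnonneg : ∀ n, 0 ≤ b n) (hsum : ∑' n : ℕ, b n = 1) (hb1 : b0 ≤ b 1)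
    (hmean : Summable (fun n : ℕ => (n : ℝ) * b n))
    (c1 : ℝ) (hc1 : c1 = ∑' n : ℕ, (n : ℝ) * b n)
    (α : ℝ) (hα : α = (c1 - 1) / (1 - b0))
    (cl : ℕ → ℝ) (hcl : ∀ l, cl l = ∑' j : ℕ, b (j + l + 1)) :
    ∀ l : ℕ, 1 ≤ l →
      cl l * ‖1 - Complex.exp ((π / (l + 1)) * Complex.I)‖⁻¹ ≤
        (1 - b0) * ‖1 - Complex.exp ((π / (1 + α)) * Complex.I)‖⁻¹ := by
  intro l hl
  -- basic summability
  have hsummb : Summable b := by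
    by_contra h
    rw [tsum_eq_zero_of_not_summable h] at hsum
    norm_num at hsum
  have hsummtail : ∀ m : ℕ, Summable (fun j : ℕ => b (j + m)) := fun m =>
    (summable_nat_add_iff m).2 hsummb
  have hsummtail' : ∀ m : ℕ, Summable (fun j : ℕ => ((j + m : ℕ) : ℝ) * b (j + m)) := fun m =>
    (summable_nat_add_iff m).2 hmean
  -- cl is nonneg
  have hclnonneg : ∀ m, 0 ≤ cl m := by
    intro m
    rw [hcl m]
    exact tsum_nonneg fun j => hnonneg _
  -- b 1 ≤ 1
  have hb1le : b 1 + cl 1 = 1 := by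
    have h0 : ∑' n : ℕ, b n = b 0 + ∑' n : ℕ, b (n + 1) := Summable.tsum_eq_zero_add hsummb
    have h1 : ∑' n : ℕ, b (n + 1) = b 1 + ∑' n : ℕ, b (n + 1 + 1) :=
      Summable.tsum_eq_zero_add ((summable_nat_add_iff 1).2 hsummb)
    rw [hcl 1]
    have : ∀ j : ℕ, j + 1 + 1 = j + 1 + 1 := fun _ => rfl
    rw [h0, h1, hzero] at hsum
    linarith [hsum]
  have hclle : cl l ≤ cl 1 := by
    rw [hcl l, hcl 1]
    refine Summable.tsum_le_tsum_of_inj (fun j => j + (l - 1)) (add_left_injective _)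
      (fun c _ => hnonneg _) (fun j => le_of_eq ?_) (hsummtail (l + 1))
      (hsummtail 2)
    show b (j + l + 1) = b (j + (l - 1) + 1 + 1)
    congr 1
    omega
  -- tail of the mean sum
  have htail2 : ∑' j : ℕ, ((j + 2 : ℕ) : ℝ) * b (j + 2) = c1 - b 1 := by
    have h0 : ∑' n : ℕ, (n : ℝ) * b n
        = ((0 : ℕ) : ℝ) * b 0 + ∑' n : ℕ, ((n + 1 : ℕ) : ℝ) * b (n + 1) :=
      Summable.tsum_eq_zero_add hmean
    have h1 : ∑' n : ℕ, ((n + 1 : ℕ) : ℝ) * b (n + 1)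
        = ((0 + 1 : ℕ) : ℝ) * b (0 + 1) + ∑' n : ℕ, ((n + 1 + 1 : ℕ) : ℝ) * b (n + 1 + 1) :=
      Summable.tsum_eq_zero_add (hsummtail' 1)
    rw [h0, h1] at hc1
    rw [hc1]
    norm_num
    refine tsum_congr fun n => ?_
    show ((n : ℝ) + 2) * b (n + 2) = ((n : ℝ) + 1 + 1) * b (n + 2)
    ring
  have hkey1 : ((l : ℝ) + 1) * cl l ≤ c1 - b 1 := by
    rw [hcl l, ← tsum_mul_left]
    calc ∑' j : ℕ, ((l : ℝ) + 1) * b (j + l + 1)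
        ≤ ∑' j : ℕ, ((j + l + 1 : ℕ) : ℝ) * b (j + l + 1) := by
          refine Summable.tsum_le_tsum (fun j => ?_) ((hsummtail (l + 1)).mul_left _)
            (hsummtail' (l + 1))
          have h1 : ((l : ℝ) + 1) ≤ ((j + l + 1 : ℕ) : ℝ) := by push_cast; linarith [Nat.cast_nonneg (α := ℝ) j]
          exact mul_le_mul_of_nonneg_right h1 (hnonneg _)
      _ ≤ ∑' j : ℕ, ((j + 2 : ℕ) : ℝ) * b (j + 2) := by
          refine Summable.tsum_le_tsum_of_inj (fun j => j + (l - 1)) (add_left_injective _)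
            (fun c _ => mul_nonneg (Nat.cast_nonneg _) (hnonneg _)) (fun j => le_of_eq ?_)
            (hsummtail' (l + 1)) (hsummtail' 2)
          show ((j + l + 1 : ℕ) : ℝ) * b (j + l + 1) = ((j + (l - 1) + 2 : ℕ) : ℝ) * b (j + (l - 1) + 2)
          have h : j + (l - 1) + 2 = j + l + 1 := by omega
          rw [h]
      _ = c1 - b 1 := htail2
  have hb1le1 : b 1 ≤ 1 := by linarith [hclnonneg 1]
  have hb0le1 : b0 ≤ 1 := le_trans hb1 hb1le1
  have habs2nonneg : (0:ℝ) ≤ ‖1 - Complex.exp ((π / (1 + α)) * Complex.I)‖⁻¹ :=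
    inv_nonneg.2 (norm_nonneg _)
  by_cases hcl0 : cl l = 0
  · rw [hcl0, zero_mul]
    exact mul_nonneg (by linarith) habs2nonneg
  have hclpos : 0 < cl l := lt_of_le_of_ne (hclnonneg l) (Ne.symm hcl0)
  have hb1lt : b 1 < 1 := by
    by_contra h
    push_neg at h
    have : cl 1 ≤ 0 := by linarith
    linarith [hclle]
  have hb0lt : b0 < 1 := lt_of_le_of_lt hb1 hb1lt
  have hc1ge : 1 ≤ c1 := by
    rw [hc1, ← hsum]
    refine Summable.tsum_le_tsum (fun n => ?_) hsummb hmean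
    rcases Nat.eq_zero_or_pos n with h | h
    · simp [h, hzero]
    · have h1 : (1 : ℝ) ≤ (n : ℝ) := by exact_mod_cast h
      nlinarith [hnonneg n]
  have hαnonneg : 0 ≤ α := by
    rw [hα]
    exact div_nonneg (by linarith) (by linarith)
  have hαval : (1 - b0) * (1 + α) = c1 - b0 := by
    have hne : (1:ℝ) - b0 ≠ 0 := ne_of_gt (by linarith)
    rw [hα]
    field_simp
    ring
  -- rewrite the complex absolute values
  have hl1pos : (0:ℝ) < (l : ℝ) + 1 := by positivity
  have hαpos : (0:ℝ) < 1 + α := by linarith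
  have e1 : ((π : ℂ) / ((l : ℕ) + 1)) * Complex.I
      = ((π / ((l : ℝ) + 1) : ℝ) : ℂ) * Complex.I := by push_cast; ring
  have e2 : ((π : ℂ) / (1 + (α : ℝ))) * Complex.I
      = ((π / (1 + α) : ℝ) : ℂ) * Complex.I := by push_cast; ring
  have hπpos := Real.pi_pos
  have hθ1a : 0 ≤ π / ((l : ℝ) + 1) := by positivity
  have hθ1b : π / ((l : ℝ) + 1) ≤ 2 * π := by
    rw [div_le_iff₀ hl1pos]
    nlinarith
  have hθ2a : 0 ≤ π / (1 + α) := by positivity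
  have hθ2b : π / (1 + α) ≤ 2 * π := by
    rw [div_le_iff₀ hαpos]
    nlinarith
  rw [e1, e2, my_abs_one_sub_exp _ hθ1a hθ1b, my_abs_one_sub_exp _ hθ2a hθ2b]
  set γ : ℝ := π / ((l : ℝ) + 1) / 2 with hγ
  set β : ℝ := π / (1 + α) / 2 with hβ
  have hγpos : 0 < γ := by rw [hγ]; positivity
  have hβpos : 0 < β := by rw [hβ]; positivity
  have hl2 : (2:ℝ) ≤ (l : ℝ) + 1 := by
    have : (1:ℝ) ≤ (l:ℝ) := by exact_mod_cast hl
    linarith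
  have hγle : γ ≤ π / 2 := by
    rw [hγ]
    have h := div_le_self hπpos.le (by linarith : (1:ℝ) ≤ (l : ℝ) + 1)
    linarith
  have hβle : β ≤ π / 2 := by
    rw [hβ]
    have h := div_le_self hπpos.le (by linarith : (1:ℝ) ≤ 1 + α)
    linarith
  have hsinγpos : 0 < Real.sin γ := Real.sin_pos_of_pos_of_lt_pi hγpos (by linarith)
  have hsinβpos : 0 < Real.sin β := Real.sin_pos_of_pos_of_lt_pi hβpos (by linarith)
  rw [← div_eq_mul_inv, ← div_eq_mul_inv,
    div_le_div_iff₀ (by linarith) (by linarith)]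
  -- goal : cl l * (2 * sin β) ≤ (1 - b0) * (2 * sin γ)
  have hclle1 : cl l ≤ 1 - b 1 := by linarith [hclle]
  rcases le_or_gt ((l : ℝ) + 1) (1 + α) with hcase | hcase
  · -- small l : use monotonicity of sin
    have hβγ : β ≤ γ := by
      rw [hβ, hγ]
      gcongr
    have hsinle : Real.sin β ≤ Real.sin γ :=
      Real.sin_le_sin_of_le_of_le_pi_div_two (by linarith) hγle hβγ
    nlinarith
  · -- large l : use concavity of sin
    have ht0 : 0 ≤ (1 + α) / ((l : ℝ) + 1) := by positivity
    have ht1 : (1 + α) / ((l : ℝ) + 1) ≤ 1 := by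
      rw [div_le_one hl1pos]
      linarith
    have hγeq : γ = ((1 + α) / ((l : ℝ) + 1)) * β := by
      rw [hγ, hβ]
      field_simp
    have hsin := my_sin_mul_ge ((1 + α) / ((l : ℝ) + 1)) β ht0 ht1 hβpos.le (by linarith)
    rw [← hγeq] at hsin
    -- (1+α)/(l+1) * sin β ≤ sin γ
    have hkey2 : ((l : ℝ) + 1) * cl l ≤ (1 - b0) * (1 + α) := by
      rw [hαval]
      linarith
    have h5 : cl l * Real.sin β ≤ (1 - b0) * Real.sin γ := by
      have h6 : ((l : ℝ) + 1) * (cl l * Real.sin β) ≤ ((l : ℝ) + 1) * ((1 - b0) * Real.sin γ) := by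
        have h7 : ((l : ℝ) + 1) * cl l * Real.sin β ≤ (1 - b0) * (1 + α) * Real.sin β :=
          mul_le_mul_of_nonneg_right hkey2 hsinβpos.le
        have h8 : (1 - b0) * ((1 + α) / ((l : ℝ) + 1) * Real.sin β) ≤ (1 - b0) * Real.sin γ :=
          mul_le_mul_of_nonneg_left hsin (by linarith)
        have h9 : (1 - b0) * (1 + α) * Real.sin β
            = ((l : ℝ) + 1) * ((1 - b0) * ((1 + α) / ((l : ℝ) + 1) * Real.sin β)) := by
          field_simp
        nlinarith
      exact le_of_mul_le_mul_left h6 hl1pos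
    nlinarith
end

section
/- Suppose the drift condition holds: V : S → [1, ∞), PV(x) ≤ λV(x) for x ∉ C and PV(x) ≤ K for x ∈ C, with λ < 1. Let τ = inf{n ≥ 1 : X_n ∈ C} and G(r, x) = E_x[r^τ]. Then for all 1 ≤ r ≤ λ^{-1}: G(r, x) ≤ V(x) if x ∉ C, and G(r, x) ≤ rK if x ∈ C. In particular P_x(τ < ∞) = 1 for all x. -/
open MeasureTheory ProbabilityTheory
open scoped ENNReal

theorem stmt_12 {S : Type*} [MeasurableSpace S]
    (P : Kernel S S) [IsMarkovKernel P]
    (C : Set S) (hC : MeasurableSet C)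
    (V : S → ℝ) (hV1 : ∀ x, 1 ≤ V x)
    (hVint : ∀ x, Integrable V (P x))
    (lam K : ℝ) (hlam0 : 0 < lam) (hlam1 : lam < 1)
    (hdrift_out : ∀ x ∉ C, ∫ y, V y ∂(P x) ≤ lam * V x)
    (hdrift_in : ∀ x ∈ C, ∫ y, V y ∂(P x) ≤ K)
    -- h n x = P_x(τ = n), the distribution of the first hitting time of C
    (h : ℕ → S → ℝ) (h0 : ∀ x, h 0 x = 0)
    (h1 : ∀ x, h 1 x = (P x C).toReal)
    (hrec : ∀ n : ℕ, 1 ≤ n → ∀ x, h (n + 1) x = ∫ y in Cᶜ, h n y ∂(P x)) :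
    (∀ r : ℝ, 1 ≤ r → r ≤ lam⁻¹ →
      (∀ x ∉ C, ∑' n : ℕ, h n x * r ^ n ≤ V x) ∧
      (∀ x ∈ C, ∑' n : ℕ, h n x * r ^ n ≤ r * K)) ∧
    (∀ x, ∑' n : ℕ, h n x = 1) := by
  have hCc : MeasurableSet Cᶜ := hC.compl
  -- measurability of h n
  have hmeas : ∀ n, Measurable (h n) := by
    intro n
    induction n with
    | zero =>
      have : h 0 = fun _ => (0:ℝ) := funext h0
      rw [this]; exact measurable_const
    | succ m ih =>
      rcases Nat.eq_zero_or_pos m with hm | hm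
      · subst hm
        have : h 1 = fun x => (P x C).toReal := funext h1
        rw [this]
        exact (P.measurable_coe hC).ennreal_toReal
      · have : h (m+1) = fun x => ∫ y in Cᶜ, h m y ∂(P x) := funext (hrec m hm)
        rw [this]
        have : (fun x => ∫ y in Cᶜ, h m y ∂(P x))
            = fun x => ∫ y, Cᶜ.indicator (h m) y ∂(P x) := by
          funext x; rw [integral_indicator hCc]
        rw [this]
        have hsm : StronglyMeasurable (fun p : S × S => Cᶜ.indicator (h m) p.2) :=
          ((ih.indicator hCc).comp measurable_snd).stronglyMeasurable
        exact hsm.integral_kernel_prod_right'.measurable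
  -- nonnegativity
  have hnn : ∀ n x, 0 ≤ h n x := by
    intro n
    induction n with
    | zero => intro x; simp [h0]
    | succ m ih =>
      intro x
      rcases Nat.eq_zero_or_pos m with hm | hm
      · subst hm; rw [h1]; exact ENNReal.toReal_nonneg
      · rw [hrec m hm]
        exact setIntegral_nonneg hCc fun y _ => ih y
  -- integrability from a pointwise bound by 1
  have hintaux : ∀ n, (∀ x, h n x ≤ 1) → ∀ x, Integrable (h n) (P x) := by
    intro n hb x
    refine (integrable_const (1:ℝ)).mono' (hmeas n).aestronglyMeasurable ?_
    exact ae_of_all _ fun y => by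
      rw [Real.norm_eq_abs, abs_of_nonneg (hnn n y)]; exact hb y
  have hle1 : ∀ n x, h n x ≤ 1 := by
    intro n
    induction n with
    | zero => intro x; simp [h0]
    | succ m ih =>
      intro x
      rcases Nat.eq_zero_or_pos m with hm | hm
      · subst hm; rw [h1]
        calc (P x C).toReal ≤ (1:ℝ≥0∞).toReal :=
              ENNReal.toReal_mono ENNReal.one_ne_top prob_le_one
          _ = 1 := by simp
      · rw [hrec m hm]
        calc ∫ y in Cᶜ, h m y ∂(P x) ≤ ∫ _y in Cᶜ, (1:ℝ) ∂(P x) :=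
              setIntegral_mono_on ((hintaux m ih x).restrict)
                (integrable_const 1).restrict hCc (fun y _ => ih y)
          _ = (P x Cᶜ).toReal := by simp [setIntegral_const, Measure.real]
          _ ≤ (1:ℝ≥0∞).toReal := ENNReal.toReal_mono ENNReal.one_ne_top prob_le_one
          _ = 1 := by simp
  have hInt : ∀ n x, Integrable (h n) (P x) := fun n => hintaux n (hle1 n)
  -- the fundamental recursion for weighted partial sums
  have sumrec : ∀ (r : ℝ) (N : ℕ) (x : S),
      ∑ n ∈ Finset.range (N+1), h (n+1) x * r^(n+1)
        = r * ((P x C).toReal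
            + ∫ y in Cᶜ, (∑ n ∈ Finset.range N, h (n+1) y * r^(n+1)) ∂(P x)) := by
    intro r N x
    rw [Finset.sum_range_succ', h1, pow_one]
    have e1 : ∀ i ∈ Finset.range N, h (i+1+1) x * r^(i+1+1)
        = ∫ y in Cᶜ, h (i+1) y * r^(i+1) * r ∂(P x) := by
      intro i _
      rw [hrec (i+1) (Nat.le_add_left 1 i) x, integral_mul_const, integral_mul_const]
      ring
    rw [Finset.sum_congr rfl e1,
      ← integral_finset_sum _ (fun i _ => ((hInt (i+1) x).restrict.mul_const _).mul_const _)]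
    simp_rw [← Finset.sum_mul]
    rw [integral_mul_const]
    ring
  -- 1 ≤ ∫ V
  have hone_le : ∀ x, (1:ℝ) ≤ ∫ y, V y ∂(P x) := by
    intro x
    calc (1:ℝ) = ∫ _y, (1:ℝ) ∂(P x) := by simp
      _ ≤ ∫ y, V y ∂(P x) := integral_mono (integrable_const 1) (hVint x) hV1
  have hVnn : ∀ y, (0:ℝ) ≤ V y := fun y => le_trans zero_le_one (hV1 y)
  have hVPle : ∀ x, ∫ y in Cᶜ, V y ∂(P x) ≤ ∫ y, V y ∂(P x) := fun x =>
    setIntegral_le_integral (hVint x) (ae_of_all _ hVnn)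
  -- the main inductive bound, for any admissible r
  have key : ∀ r : ℝ, 1 ≤ r → r ≤ lam⁻¹ → ∀ N : ℕ,
      (∀ x ∉ C, ∑ n ∈ Finset.range N, h (n+1) x * r^(n+1) ≤ V x) ∧
      (∀ x ∈ C, ∑ n ∈ Finset.range N, h (n+1) x * r^(n+1) ≤ r * K) := by
    intro r hr1 hr2
    have hr0 : (0:ℝ) < r := lt_of_lt_of_le one_pos hr1
    have hrlam : r * lam ≤ 1 := by
      have := mul_le_mul_of_nonneg_right hr2 hlam0.le
      rwa [inv_mul_cancel₀ hlam0.ne'] at this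
    intro N
    induction N with
    | zero =>
      constructor
      · intro x _; simpa using hVnn x
      · intro x hx
        have hK1 : (1:ℝ) ≤ K := le_trans (hone_le x) (hdrift_in x hx)
        simpa using mul_nonneg hr0.le (le_trans zero_le_one hK1)
    | succ N ih =>
      have hcom : ∀ x, ∑ n ∈ Finset.range (N+1), h (n+1) x * r^(n+1)
          ≤ r * ∫ y, V y ∂(P x) := by
        intro x
        rw [sumrec r N x]
        refine mul_le_mul_of_nonneg_left ?_ hr0.le
        have hTint : IntegrableOn (fun y => ∑ n ∈ Finset.range N, h (n+1) y * r^(n+1))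
            Cᶜ (P x) :=
          integrable_finset_sum _ (fun i _ => ((hInt (i+1) x).mul_const _).restrict)
        have h1' : (P x C).toReal ≤ ∫ y in C, V y ∂(P x) := by
          have e : (P x C).toReal = ∫ _y in C, (1:ℝ) ∂(P x) := by simp [setIntegral_const, Measure.real]
          rw [e]
          exact setIntegral_mono_on (integrable_const 1).restrict
            (hVint x).integrableOn hC (fun y _ => hV1 y)
        have h2' : ∫ y in Cᶜ, (∑ n ∈ Finset.range N, h (n+1) y * r^(n+1)) ∂(P x)
            ≤ ∫ y in Cᶜ, V y ∂(P x) :=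
          setIntegral_mono_on hTint (hVint x).integrableOn hCc (fun y hy => ih.1 y hy)
        calc (P x C).toReal + ∫ y in Cᶜ, (∑ n ∈ Finset.range N, h (n+1) y * r^(n+1)) ∂(P x)
            ≤ (∫ y in C, V y ∂(P x)) + ∫ y in Cᶜ, V y ∂(P x) := add_le_add h1' h2'
          _ = ∫ y, V y ∂(P x) := integral_add_compl hC (hVint x)
      constructor
      · intro x hx
        calc ∑ n ∈ Finset.range (N+1), h (n+1) x * r^(n+1)
            ≤ r * ∫ y, V y ∂(P x) := hcom x
          _ ≤ r * (lam * V x) := mul_le_mul_of_nonneg_left (hdrift_out x hx) hr0.le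
          _ = (r * lam) * V x := by ring
          _ ≤ 1 * V x := mul_le_mul_of_nonneg_right hrlam (hVnn x)
          _ = V x := one_mul _
      · intro x hx
        exact le_trans (hcom x) (mul_le_mul_of_nonneg_left (hdrift_in x hx) hr0.le)
  constructor
  · -- the generating-function bounds
    intro r hr1 hr2
    have hr0 : (0:ℝ) < r := lt_of_lt_of_le one_pos hr1
    constructor
    · intro x hx
      have hps : ∀ N, ∑ n ∈ Finset.range N, h n x * r^n ≤ V x := by
        intro N
        cases N with
        | zero => simpa using hVnn x
        | succ M =>
          rw [Finset.sum_range_succ']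
          simpa [h0] using (key r hr1 hr2 M).1 x hx
      exact Real.tsum_le_of_sum_range_le
        (fun n => mul_nonneg (hnn n x) (pow_nonneg hr0.le n)) hps
    · intro x hx
      have hK1 : (1:ℝ) ≤ K := le_trans (hone_le x) (hdrift_in x hx)
      have hps : ∀ N, ∑ n ∈ Finset.range N, h n x * r^n ≤ r * K := by
        intro N
        cases N with
        | zero => simpa using mul_nonneg hr0.le (le_trans zero_le_one hK1)
        | succ M =>
          rw [Finset.sum_range_succ']
          simpa [h0] using (key r hr1 hr2 M).2 x hx
      exact Real.tsum_le_of_sum_range_le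
        (fun n => mul_nonneg (hnn n x) (pow_nonneg hr0.le n)) hps
  · -- the hitting time is a.s. finite
    intro x
    -- recursion for the tails, at r = 1
    have urec : ∀ (N : ℕ) (z : S),
        1 - ∑ n ∈ Finset.range (N+1), h (n+1) z
          = ∫ y in Cᶜ, (1 - ∑ n ∈ Finset.range N, h (n+1) y) ∂(P z) := by
      intro N z
      have A := sumrec 1 N z
      simp only [one_pow, mul_one, one_mul] at A
      have hSint : IntegrableOn (fun y => ∑ n ∈ Finset.range N, h (n+1) y) Cᶜ (P z) :=
        integrable_finset_sum _ (fun i _ => (hInt (i+1) z).restrict)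
      have hc : (P z Cᶜ).toReal = 1 - (P z C).toReal := by
        have h2 := measure_add_measure_compl (μ := P z) hC
        have h3 := congrArg ENNReal.toReal h2
        rw [ENNReal.toReal_add (measure_ne_top _ _) (measure_ne_top _ _)] at h3
        simp at h3
        linarith
      rw [integral_sub (integrable_const 1).restrict hSint]
      have e : ∫ _y in Cᶜ, (1:ℝ) ∂(P z) = (P z Cᶜ).toReal := by simp [setIntegral_const, Measure.real]
      rw [e, hc, A]
      ring
    -- tails are nonnegative
    have tnn : ∀ (N : ℕ) (z : S), 0 ≤ 1 - ∑ n ∈ Finset.range N, h (n+1) z := by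
      intro N
      induction N with
      | zero => intro z; simp
      | succ M ih =>
        intro z
        rw [urec M z]
        exact setIntegral_nonneg hCc fun y _ => ih y
    -- integrability of tails
    have tInt : ∀ (N : ℕ) (z : S),
        IntegrableOn (fun y => 1 - ∑ n ∈ Finset.range N, h (n+1) y) Cᶜ (P z) :=
      fun N z => (integrable_const 1).restrict.sub
        (integrable_finset_sum _ (fun i _ => (hInt (i+1) z).restrict))
    -- tails decay geometrically off C
    have tbV : ∀ (N : ℕ), ∀ z ∉ C,
        1 - ∑ n ∈ Finset.range N, h (n+1) z ≤ lam^N * V z := by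
      intro N
      induction N with
      | zero => intro z _; simpa using hV1 z
      | succ M ih =>
        intro z hz
        rw [urec M z]
        have step1 : ∫ y in Cᶜ, (1 - ∑ n ∈ Finset.range M, h (n+1) y) ∂(P z)
            ≤ ∫ y in Cᶜ, lam^M * V y ∂(P z) :=
          setIntegral_mono_on (tInt M z) ((hVint z).const_mul _).integrableOn hCc
            (fun y hy => ih y hy)
        calc ∫ y in Cᶜ, (1 - ∑ n ∈ Finset.range M, h (n+1) y) ∂(P z)
            ≤ ∫ y in Cᶜ, lam^M * V y ∂(P z) := step1
          _ = lam^M * ∫ y in Cᶜ, V y ∂(P z) := integral_const_mul _ _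
          _ ≤ lam^M * ∫ y, V y ∂(P z) :=
              mul_le_mul_of_nonneg_left (hVPle z) (pow_nonneg hlam0.le M)
          _ ≤ lam^M * (lam * V z) :=
              mul_le_mul_of_nonneg_left (hdrift_out z hz) (pow_nonneg hlam0.le M)
          _ = lam^(M+1) * V z := by ring
    -- global tail decay
    have tbM : ∀ N : ℕ, 1 - ∑ n ∈ Finset.range (N+1), h (n+1) x
        ≤ lam^N * max K (lam * V x) := by
      intro N
      rw [urec N x]
      have step1 : ∫ y in Cᶜ, (1 - ∑ n ∈ Finset.range N, h (n+1) y) ∂(P x)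
          ≤ ∫ y in Cᶜ, lam^N * V y ∂(P x) :=
        setIntegral_mono_on (tInt N x) ((hVint x).const_mul _).integrableOn hCc
          (fun y hy => tbV N y hy)
      have step2 : ∫ y in Cᶜ, (1 - ∑ n ∈ Finset.range N, h (n+1) y) ∂(P x)
          ≤ lam^N * ∫ y, V y ∂(P x) := by
        calc ∫ y in Cᶜ, (1 - ∑ n ∈ Finset.range N, h (n+1) y) ∂(P x)
            ≤ ∫ y in Cᶜ, lam^N * V y ∂(P x) := step1
          _ = lam^N * ∫ y in Cᶜ, V y ∂(P x) := integral_const_mul _ _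
          _ ≤ lam^N * ∫ y, V y ∂(P x) :=
              mul_le_mul_of_nonneg_left (hVPle x) (pow_nonneg hlam0.le N)
      refine le_trans step2 (mul_le_mul_of_nonneg_left ?_ (pow_nonneg hlam0.le N))
      by_cases hx : x ∈ C
      · exact le_trans (hdrift_in x hx) (le_max_left _ _)
      · exact le_trans (hdrift_out x hx) (le_max_right _ _)
    -- summability
    have hsummable : Summable (fun n => h n x) := by
      refine summable_of_sum_range_le (fun n => hnn n x) (c := max (V x) (1 * K)) ?_
      intro N
      cases N with
      | zero => simp [le_max_iff]; left; exact hVnn x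
      | succ M =>
        rw [Finset.sum_range_succ']
        have hr2 : (1:ℝ) ≤ lam⁻¹ := le_of_lt ((one_lt_inv₀ hlam0).2 hlam1)
        by_cases hx : x ∈ C
        · have := (key 1 le_rfl hr2 M).2 x hx
          simp only [one_pow, mul_one] at this
          simpa [h0] using le_trans this (le_max_right _ _)
        · have := (key 1 le_rfl hr2 M).1 x hx
          simp only [one_pow, mul_one] at this
          simpa [h0] using le_trans this (le_max_left _ _)
    -- the shifted partial sums tend to 1
    have hlim0 : Filter.Tendsto (fun N : ℕ => lam^N * max K (lam * V x))
        Filter.atTop (nhds 0) := by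
      simpa using (tendsto_pow_atTop_nhds_zero_of_lt_one hlam0.le hlam1).mul_const
        (max K (lam * V x))
    have ht0 : Filter.Tendsto (fun N : ℕ => 1 - ∑ n ∈ Finset.range (N+1), h (n+1) x)
        Filter.atTop (nhds 0) :=
      tendsto_of_tendsto_of_tendsto_of_le_of_le tendsto_const_nhds hlim0
        (fun N => tnn (N+1) x) (fun N => tbM N)
    have ht1 : Filter.Tendsto (fun N : ℕ => ∑ n ∈ Finset.range (N+1), h (n+1) x)
        Filter.atTop (nhds 1) := by
      have := ht0.const_sub 1
      simpa using this
    -- the partial sums also tend to the tsum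
    have hS : Filter.Tendsto (fun N : ℕ => ∑ n ∈ Finset.range N, h n x)
        Filter.atTop (nhds (∑' n, h n x)) := hsummable.hasSum.tendsto_sum_nat
    have hS2 : Filter.Tendsto (fun N : ℕ => ∑ n ∈ Finset.range (N+2), h n x)
        Filter.atTop (nhds (∑' n, h n x)) :=
      hS.comp (Filter.tendsto_add_atTop_nat 2)
    have heq : (fun N : ℕ => ∑ n ∈ Finset.range (N+2), h n x)
        = fun N : ℕ => ∑ n ∈ Finset.range (N+1), h (n+1) x := by
      funext N
      rw [Finset.sum_range_succ']
      simp [h0]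
    rw [heq] at hS2
    exact tendsto_nhds_unique hS2 ht1
end

section
/- Under the drift condition (PV ≤ λV off C, PV ≤ K on C, V ≥ 1, λ < 1), let H₁(r, x) = E_x[Σ_{n=1}^τ r^n] = r(G(r,x) − 1)/(r − 1). Then for 1 ≤ r ≤ λ^{-1}: H₁(r, x) ≤ rλ(V(x) − 1)/(1 − λ) for x ∉ C, and H₁(r, x) ≤ r(K − λ)/(1 − λ) for x ∈ C. -/
open MeasureTheory ProbabilityTheory

private lemma stmt13_meas_setInt {S : Type*} [MeasurableSpace S]
    (P : Kernel S S) [IsSFiniteKernel P] {s : Set S} (hs : MeasurableSet s)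
    {f : S → ℝ} (hf : Measurable f) :
    Measurable fun x => ∫ y in s, f y ∂(P x) := by
  have h1 : StronglyMeasurable (Function.uncurry fun (_ : S) y => s.indicator f y) :=
    ((hf.indicator hs).comp measurable_snd).stronglyMeasurable
  have h2 := h1.integral_kernel_prod_right (κ := P)
  have h3 : (fun x => ∫ y, s.indicator f y ∂(P x)) = fun x => ∫ y in s, f y ∂(P x) := by
    funext x; exact integral_indicator hs
  rw [h3] at h2
  exact h2.measurable

private lemma stmt13_int_bdd {S : Type*} [MeasurableSpace S]
    {μ : Measure S} [IsFiniteMeasure μ] {f : S → ℝ} (hf : Measurable f)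
    {B : ℝ} (hB : ∀ y, |f y| ≤ B) : Integrable f μ :=
  (integrable_const B).mono' hf.aestronglyMeasurable (Filter.Eventually.of_forall fun y => by
    simpa using hB y)

private lemma stmt13_sum_shift (f : ℕ → ℝ) :
    ∀ N, ∑ m ∈ Finset.Icc 1 (N+1), f m = f 1 + ∑ m ∈ Finset.Icc 1 N, f (m+1) := by
  intro N
  induction N with
  | zero => simp
  | succ N ih =>
    rw [Finset.sum_Icc_succ_top (by omega), ih,
      Finset.sum_Icc_succ_top (a := 1) (b := N) (by omega)]
    ring

private lemma stmt13_range_Icc {f : ℕ → ℝ} (hf0 : f 0 = 0) :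
    ∀ N, ∑ m ∈ Finset.range (N+1), f m = ∑ m ∈ Finset.Icc 1 N, f m := by
  intro N
  induction N with
  | zero => simpa using hf0
  | succ N ih => rw [Finset.sum_range_succ, ih, Finset.sum_Icc_succ_top (by omega)]

private lemma stmt13_pow_sum (r : ℝ) :
    ∀ m, ∑ k ∈ Finset.Icc 1 m, r ^ k = r * ∑ i ∈ Finset.range m, r ^ i := by
  intro m
  induction m with
  | zero => simp
  | succ m ih =>
    rw [Finset.sum_Icc_succ_top (by omega), ih, Finset.sum_range_succ]
    ring

theorem stmt_13 {S : Type*} [MeasurableSpace S]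
    (P : Kernel S S) [IsMarkovKernel P]
    (C : Set S) (hC : MeasurableSet C)
    (V : S → ℝ) (hV1 : ∀ x, 1 ≤ V x)
    (hVint : ∀ x, Integrable V (P x))
    (lam K : ℝ) (hlam0 : 0 < lam) (hlam1 : lam < 1)
    (hdrift_out : ∀ x ∉ C, ∫ y, V y ∂(P x) ≤ lam * V x)
    (hdrift_in : ∀ x ∈ C, ∫ y, V y ∂(P x) ≤ K)
    -- h n x = P_x(τ = n), the distribution of the first return time to C
    (h : ℕ → S → ℝ) (h0 : ∀ x, h 0 x = 0)
    (h1 : ∀ x, h 1 x = (P x C).toReal)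
    (hrec : ∀ n : ℕ, 1 ≤ n → ∀ x, h (n + 1) x = ∫ y in Cᶜ, h n y ∂(P x))
    -- H₁(r,x) = E_x[Σ_{n=1}^τ r^n]
    (H₁ : ℝ → S → ℝ)
    (hH₁ : ∀ r x, H₁ r x = ∑' m : ℕ, h m x * ∑ k ∈ Finset.Icc 1 m, r ^ k) :
    ∀ r : ℝ, 1 ≤ r → r ≤ lam⁻¹ →
      (∀ x ∉ C, H₁ r x ≤ r * lam * (V x - 1) / (1 - lam)) ∧
      (∀ x ∈ C, H₁ r x ≤ r * (K - lam) / (1 - lam)) := by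
  set c : ℝ := lam⁻¹ with hc
  have hc1 : 1 < c := (one_lt_inv₀ hlam0).mpr hlam1
  have hc0 : 0 < c := lt_trans one_pos hc1
  -- basic properties of h
  have hhm : ∀ n, Measurable (h n) ∧ ∀ x, 0 ≤ h n x ∧ h n x ≤ 1 := by
    intro n
    induction n with
    | zero =>
      have : h 0 = fun _ => (0:ℝ) := funext h0
      rw [this]
      exact ⟨measurable_const, fun x => ⟨le_refl 0, zero_le_one⟩⟩
    | succ n ih =>
      cases n with
      | zero =>
        have he : h 1 = fun x => (P x C).toReal := funext h1
        rw [he]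
        refine ⟨(P.measurable_coe hC).ennreal_toReal, fun x => ⟨ENNReal.toReal_nonneg, ?_⟩⟩
        simpa using ENNReal.toReal_mono ENNReal.one_ne_top (prob_le_one (μ := P x) (s := C))
      | succ k =>
        have hk1 : 1 ≤ k + 1 := by omega
        have he : h (k+1+1) = fun x => ∫ y in Cᶜ, h (k+1) y ∂(P x) :=
          funext (hrec (k+1) hk1)
        rw [he]
        refine ⟨stmt13_meas_setInt P hC.compl ih.1, fun x => ⟨?_, ?_⟩⟩
        · exact setIntegral_nonneg hC.compl fun y _ => (ih.2 y).1
        · calc ∫ y in Cᶜ, h (k+1) y ∂(P x) ≤ ∫ _ in Cᶜ, (1:ℝ) ∂(P x) := by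
                refine setIntegral_mono_on ?_ ?_ hC.compl fun y _ => (ih.2 y).2
                · exact (stmt13_int_bdd ih.1 (B := 1) fun y =>
                    abs_le.mpr ⟨by linarith [(ih.2 y).1], (ih.2 y).2⟩).integrableOn
                · exact (integrable_const (1:ℝ)).integrableOn
            _ = ((P x) Cᶜ).toReal := by simp [setIntegral_const, Measure.real]
            _ ≤ 1 := by
                simpa using ENNReal.toReal_mono ENNReal.one_ne_top (prob_le_one (μ := P x) (s := Cᶜ))
  have hIh : ∀ m x, Integrable (h m) (P x) := fun m x =>
    stmt13_int_bdd (hhm m).1 (B := 1) fun y =>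
      abs_le.mpr ⟨by linarith [((hhm m).2 y).1], ((hhm m).2 y).2⟩
  -- the survival function g N x = P_x(τ > N)
  let g : ℕ → S → ℝ := fun n => n.rec (fun _ => 1) (fun _ gn x => ∫ y in Cᶜ, gn y ∂(P x))
  have hg0 : ∀ x, g 0 x = 1 := fun _ => rfl
  have hgs : ∀ n x, g (n+1) x = ∫ y in Cᶜ, g n y ∂(P x) := fun _ _ => rfl
  have hgm : ∀ n, Measurable (g n) ∧ ∀ x, 0 ≤ g n x ∧ g n x ≤ 1 := by
    intro n
    induction n with
    | zero => exact ⟨measurable_const, fun x => ⟨zero_le_one, le_refl 1⟩⟩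
    | succ n ih =>
      refine ⟨stmt13_meas_setInt P hC.compl ih.1, fun x => ⟨?_, ?_⟩⟩
      · exact setIntegral_nonneg hC.compl fun y _ => (ih.2 y).1
      · calc ∫ y in Cᶜ, g n y ∂(P x) ≤ ∫ _ in Cᶜ, (1:ℝ) ∂(P x) := by
              refine setIntegral_mono_on ?_ ?_ hC.compl fun y _ => (ih.2 y).2
              · exact (stmt13_int_bdd ih.1 (B := 1) fun y =>
                  abs_le.mpr ⟨by linarith [(ih.2 y).1], (ih.2 y).2⟩).integrableOn
              · exact (integrable_const (1:ℝ)).integrableOn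
          _ = ((P x) Cᶜ).toReal := by simp [setIntegral_const, Measure.real]
          _ ≤ 1 := by
              simpa using ENNReal.toReal_mono ENNReal.one_ne_top (prob_le_one (μ := P x) (s := Cᶜ))
  have hIg : ∀ n x, Integrable (g n) (P x) := fun n x =>
    stmt13_int_bdd (hgm n).1 (B := 1) fun y =>
      abs_le.mpr ⟨by linarith [((hgm n).2 y).1], ((hgm n).2 y).2⟩
  -- splitting of total mass: ∑_{m=1}^N h m x + g N x = 1
  have hsplit : ∀ N x, ∑ m ∈ Finset.Icc 1 N, h m x + g N x = 1 := by
    intro N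
    induction N with
    | zero => intro x; simpa using hg0 x
    | succ N ih =>
      intro x
      have e1 : ∑ m ∈ Finset.Icc 1 (N+1), h m x
          = h 1 x + ∑ m ∈ Finset.Icc 1 N, h (m+1) x := stmt13_sum_shift (fun m => h m x) N
      have e2 : ∑ m ∈ Finset.Icc 1 N, h (m+1) x
          = ∫ y in Cᶜ, ∑ m ∈ Finset.Icc 1 N, h m y ∂(P x) := by
        rw [integral_finset_sum _ fun m _ => (hIh m x).integrableOn]
        exact Finset.sum_congr rfl fun m hm => hrec m (Finset.mem_Icc.mp hm).1 x
      have e3 : ∫ y in Cᶜ, ∑ m ∈ Finset.Icc 1 N, h m y ∂(P x)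
          = ∫ y in Cᶜ, (1 - g N y) ∂(P x) := by
        refine integral_congr_ae (Filter.Eventually.of_forall fun y => ?_)
        show ∑ m ∈ Finset.Icc 1 N, h m y = 1 - g N y
        have := ih y; linarith
      have e4 : ∫ y in Cᶜ, (1 - g N y) ∂(P x)
          = ((P x) Cᶜ).toReal - ∫ y in Cᶜ, g N y ∂(P x) := by
        rw [integral_sub (integrable_const (1:ℝ)).integrableOn (hIg N x).integrableOn]
        simp [setIntegral_const, Measure.real]
      have e5 : (P x C).toReal + ((P x) Cᶜ).toReal = 1 := by
        have := measure_add_measure_compl (μ := P x) hC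
        have h6 : (P x C).toReal + ((P x) Cᶜ).toReal = ((P x C) + (P x Cᶜ)).toReal :=
          (ENNReal.toReal_add (measure_ne_top _ _) (measure_ne_top _ _)).symm
        rw [h6, this]; simp
      rw [e1, e2, e3, e4, hgs, h1]
      linarith
  -- the weighted sums T N
  set T : ℕ → S → ℝ := fun N x => ∑ m ∈ Finset.Icc 1 N, c^m * h m x with hT
  have hTm : ∀ N, Measurable (T N) := fun N =>
    Finset.measurable_sum _ fun m _ => ((hhm m).1.const_mul _)
  have hTb : ∀ N y, 0 ≤ T N y ∧ T N y ≤ ∑ m ∈ Finset.Icc 1 N, c^m := by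
    intro N y
    constructor
    · exact Finset.sum_nonneg fun m _ =>
        mul_nonneg (pow_nonneg hc0.le m) (((hhm m).2 y).1)
    · refine Finset.sum_le_sum fun m _ => ?_
      have := ((hhm m).2 y).2
      nlinarith [pow_nonneg hc0.le m, ((hhm m).2 y).1]
  have hIT : ∀ N x, Integrable (T N) (P x) := by
    intro N x
    refine stmt13_int_bdd (hTm N) (B := ∑ m ∈ Finset.Icc 1 N, c^m) fun y => ?_
    have := hTb N y
    rw [abs_le]; exact ⟨by linarith, this.2⟩
  -- the drift step
  have step : ∀ N, (∀ y ∉ C, T N y + c^N * g N y ≤ V y) →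
      ∀ x, T (N+1) x + c^(N+1) * g (N+1) x ≤ c * ∫ y, V y ∂(P x) := by
    intro N hyp x
    have e1 : T (N+1) x = c * (P x C).toReal + c * ∫ y in Cᶜ, T N y ∂(P x) := by
      show ∑ m ∈ Finset.Icc 1 (N+1), c^m * h m x = _
      rw [stmt13_sum_shift (fun m => c^m * h m x) N]
      have e11 : c^1 * h 1 x = c * (P x C).toReal := by rw [pow_one, h1]
      have e12 : ∑ m ∈ Finset.Icc 1 N, c^(m+1) * h (m+1) x
          = c * ∫ y in Cᶜ, T N y ∂(P x) := by
        have e13 : ∀ m ∈ Finset.Icc 1 N, c^(m+1) * h (m+1) x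
            = ∫ y in Cᶜ, c * (c^m * h m y) ∂(P x) := by
          intro m hm
          rw [hrec m (Finset.mem_Icc.mp hm).1 x, integral_const_mul, integral_const_mul]
          ring
        rw [Finset.sum_congr rfl e13,
          ← integral_finset_sum _ fun m _ => (((hIh m x).const_mul _).const_mul _).integrableOn]
        have e14 : ∀ a, ∑ m ∈ Finset.Icc 1 N, c * (c^m * h m a) = c * T N a := fun a => by
          rw [← Finset.mul_sum]
        simp only [e14]
        exact integral_const_mul c _
      rw [e11, e12]
    have e2 : c^(N+1) * g (N+1) x = c * ∫ y in Cᶜ, c^N * g N y ∂(P x) := by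
      rw [hgs, integral_const_mul]; ring
    have e3 : (∫ y in Cᶜ, T N y ∂(P x)) + ∫ y in Cᶜ, c^N * g N y ∂(P x)
        = ∫ y in Cᶜ, (T N y + c^N * g N y) ∂(P x) :=
      (integral_add (hIT N x).integrableOn ((hIg N x).const_mul _).integrableOn).symm
    have e4 : ∫ y in Cᶜ, (T N y + c^N * g N y) ∂(P x) ≤ ∫ y in Cᶜ, V y ∂(P x) := by
      refine setIntegral_mono_on
        ((hIT N x).add ((hIg N x).const_mul _)).integrableOn
        (hVint x).integrableOn hC.compl fun y hy => ?_
      exact hyp y hy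
    have e5 : (P x C).toReal ≤ ∫ y in C, V y ∂(P x) := by
      have : ∫ _ in C, (1:ℝ) ∂(P x) ≤ ∫ y in C, V y ∂(P x) :=
        setIntegral_mono_on (integrable_const (1:ℝ)).integrableOn
          (hVint x).integrableOn hC fun y _ => hV1 y
      simpa [setIntegral_const, Measure.real] using this
    have e6 : (∫ y in C, V y ∂(P x)) + ∫ y in Cᶜ, V y ∂(P x) = ∫ y, V y ∂(P x) :=
      integral_add_compl hC (hVint x)
    calc T (N+1) x + c^(N+1) * g (N+1) x
        = c * ((P x C).toReal + ((∫ y in Cᶜ, T N y ∂(P x)) + ∫ y in Cᶜ, c^N * g N y ∂(P x))) := by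
          rw [e1, e2]; ring
      _ ≤ c * ∫ y, V y ∂(P x) := by
          rw [e3]
          refine mul_le_mul_of_nonneg_left ?_ hc0.le
          linarith
  -- the key drift estimates
  have key : ∀ N, ∀ y ∉ C, T N y + c^N * g N y ≤ V y := by
    intro N
    induction N with
    | zero =>
      intro y _
      have : T 0 y = 0 := by simp [hT]
      rw [this, hg0]
      simpa using hV1 y
    | succ N ih =>
      intro y hy
      refine (step N ih y).trans ?_
      have := hdrift_out y hy
      calc c * ∫ z, V z ∂(P y) ≤ c * (lam * V y) :=
            mul_le_mul_of_nonneg_left this hc0.le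
        _ = V y := by
            rw [hc]; field_simp
  have keyC : ∀ x ∈ C, ∀ N, T N x + c^N * g N x ≤ c * K := by
    intro x hx N
    have hK1 : 1 ≤ K := by
      have h7 : (1:ℝ) ≤ ∫ y, V y ∂(P x) := by
        have : ∫ _, (1:ℝ) ∂(P x) ≤ ∫ y, V y ∂(P x) :=
          integral_mono (integrable_const 1) (hVint x) hV1
        simpa using this
      linarith [hdrift_in x hx]
    cases N with
    | zero =>
      have : T 0 x = 0 := by simp [hT]
      rw [this, hg0]
      nlinarith
    | succ N =>
      refine (step N (key N) x).trans ?_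
      exact mul_le_mul_of_nonneg_left (hdrift_in x hx) hc0.le
  -- derived bounds on ∑ (c^m - 1) h m
  have hDgen : ∀ x N, (∀ M, T M x + c^M * g M x ≤ V x) →
      ∑ m ∈ Finset.Icc 1 N, (c^m - 1) * h m x ≤ V x - 1 := by
    intro x N hyp
    have e1 : ∑ m ∈ Finset.Icc 1 N, (c^m - 1) * h m x
        = T N x - ∑ m ∈ Finset.Icc 1 N, h m x := by
      rw [hT, ← Finset.sum_sub_distrib]
      exact Finset.sum_congr rfl fun m _ => by ring
    have e2 := hsplit N x
    have e3 := hyp N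
    have e4 : (1:ℝ) ≤ c^N := one_le_pow₀ hc1.le
    have e5 := ((hgm N).2 x).1
    rw [e1]
    nlinarith
  have Dout : ∀ y ∉ C, ∀ N, ∑ m ∈ Finset.Icc 1 N, (c^m - 1) * h m y ≤ V y - 1 :=
    fun y hy N => hDgen y N fun M => key M y hy
  have Din : ∀ x ∈ C, ∀ N, ∑ m ∈ Finset.Icc 1 N, (c^m - 1) * h m x ≤ c * K - 1 := by
    intro x hx N
    have e1 : ∑ m ∈ Finset.Icc 1 N, (c^m - 1) * h m x
        = T N x - ∑ m ∈ Finset.Icc 1 N, h m x := by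
      rw [hT, ← Finset.sum_sub_distrib]
      exact Finset.sum_congr rfl fun m _ => by ring
    have e2 := hsplit N x
    have e3 := keyC x hx N
    have e4 : (1:ℝ) ≤ c^N := one_le_pow₀ hc1.le
    have e5 := ((hgm N).2 x).1
    rw [e1]
    nlinarith
  -- conclusion
  intro r hr1 hr2
  have hr0 : (0:ℝ) ≤ r := by linarith
  have hcm1 : (0:ℝ) < c - 1 := by linarith
  have hcoef : 0 ≤ r / (c - 1) := div_nonneg hr0 hcm1.le
  have main : ∀ x (B : ℝ), (∀ N, ∑ m ∈ Finset.Icc 1 N, (c^m - 1) * h m x ≤ B) →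
      H₁ r x ≤ r / (c - 1) * B := by
    intro x B hB
    rw [hH₁]
    refine Real.tsum_le_of_sum_range_le (fun m => mul_nonneg ((hhm m).2 x).1
      (Finset.sum_nonneg fun k _ => pow_nonneg hr0 k)) fun N => ?_
    have term : ∀ m, h m x * ∑ k ∈ Finset.Icc 1 m, r^k
        ≤ r / (c - 1) * ((c^m - 1) * h m x) := by
      intro m
      have hs : ∑ k ∈ Finset.Icc 1 m, r^k ≤ r / (c - 1) * (c^m - 1) := by
        rw [stmt13_pow_sum]
        calc r * ∑ i ∈ Finset.range m, r^i ≤ r * ∑ i ∈ Finset.range m, c^i := by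
              refine mul_le_mul_of_nonneg_left
                (Finset.sum_le_sum fun i _ => pow_le_pow_left₀ hr0 hr2 i) hr0
          _ = r / (c - 1) * (c^m - 1) := by
              rw [geom_sum_eq hc1.ne' m]; field_simp
      calc h m x * ∑ k ∈ Finset.Icc 1 m, r^k
          ≤ h m x * (r / (c - 1) * (c^m - 1)) :=
            mul_le_mul_of_nonneg_left hs ((hhm m).2 x).1
        _ = r / (c - 1) * ((c^m - 1) * h m x) := by ring
    calc ∑ m ∈ Finset.range N, h m x * ∑ k ∈ Finset.Icc 1 m, r^k
        ≤ ∑ m ∈ Finset.range N, r / (c - 1) * ((c^m - 1) * h m x) :=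
          Finset.sum_le_sum fun m _ => term m
      _ = r / (c - 1) * ∑ m ∈ Finset.range N, (c^m - 1) * h m x := by
          rw [Finset.mul_sum]
      _ ≤ r / (c - 1) * B := by
          refine mul_le_mul_of_nonneg_left ?_ hcoef
          have hnn : ∀ m, 0 ≤ (c^m - 1) * h m x := fun m =>
            mul_nonneg (by linarith [one_le_pow₀ (n := m) hc1.le]) ((hhm m).2 x).1
          calc ∑ m ∈ Finset.range N, (c^m - 1) * h m x
              ≤ ∑ m ∈ Finset.range (N+1), (c^m - 1) * h m x := by
                rw [Finset.sum_range_succ]; linarith [hnn N]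
            _ = ∑ m ∈ Finset.Icc 1 N, (c^m - 1) * h m x := by
                refine stmt13_range_Icc ?_ N
                simp
            _ ≤ B := hB N
  have hl : lam ≠ 0 := hlam0.ne'
  have h1l : (1:ℝ) - lam ≠ 0 := by intro hq; linarith
  have hi : lam⁻¹ - 1 ≠ 0 := by intro hq; rw [hc] at hc1; linarith
  constructor
  · intro x hx
    calc H₁ r x ≤ r / (c - 1) * (V x - 1) := main x _ (Dout x hx)
      _ = r * lam * (V x - 1) / (1 - lam) := by
          rw [hc]; field_simp
  · intro x hx
    calc H₁ r x ≤ r / (c - 1) * (c * K - 1) := main x _ (Din x hx)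
      _ = r * (K - lam) / (1 - lam) := by
          rw [hc]; field_simp
end

section
/- Under the drift condition, for a ∈ C (an atom) and 1 ≤ r ≤ λ^{-1}: (H₁(r,a) − r·H₁(1,a))/(r − 1) ≤ rλ(K − 1)/(1 − λ)², where H₁(r,a) = E_a[Σ_{n=1}^τ r^n] and H₁(1,a) = E_a τ. -/
open MeasureTheory ProbabilityTheory

theorem stmt_14 {S : Type*} [MeasurableSpace S]
    (P : Kernel S S) [IsMarkovKernel P]
    (C : Set S) (hC : MeasurableSet C)
    (V : S → ℝ) (hV1 : ∀ x, 1 ≤ V x)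
    (hVint : ∀ x, Integrable V (P x))
    (lam K : ℝ) (hlam0 : 0 < lam) (hlam1 : lam < 1)
    (hdrift_out : ∀ x ∉ C, ∫ y, V y ∂(P x) ≤ lam * V x)
    (hdrift_in : ∀ x ∈ C, ∫ y, V y ∂(P x) ≤ K)
    -- h n x = P_x(τ = n), the distribution of the first return time to C
    (h : ℕ → S → ℝ) (h0 : ∀ x, h 0 x = 0)
    (h1 : ∀ x, h 1 x = (P x C).toReal)
    (hrec : ∀ n : ℕ, 1 ≤ n → ∀ x, h (n + 1) x = ∫ y in Cᶜ, h n y ∂(P x))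
    (H₁ : ℝ → S → ℝ)
    (hH₁ : ∀ r x, H₁ r x = ∑' m : ℕ, h m x * ∑ k ∈ Finset.Icc 1 m, r ^ k)
    (a : S) (ha : a ∈ C) :
    ∀ r : ℝ, 1 < r → r ≤ lam⁻¹ →
      (H₁ r a - r * H₁ 1 a) / (r - 1) ≤ r * lam * (K - 1) / (1 - lam) ^ 2 := by
  intro s hs1 hsr
  have hlamne : lam ≠ 0 := ne_of_gt hlam0
  set r : ℝ := lam⁻¹ with hrdef
  have hr1 : 1 < r := one_lt_inv_iff₀.mpr ⟨hlam0, hlam1⟩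
  have hr0 : (0:ℝ) < r := lt_trans one_pos hr1
  have hs0 : (0:ℝ) < s := lt_trans one_pos hs1
  have hlr : lam * r = 1 := mul_inv_cancel₀ hlamne
  have hrm1 : (0:ℝ) < r - 1 := by linarith
  have hsm1 : (0:ℝ) < s - 1 := by linarith
  have hpow1 : ∀ k : ℕ, (1:ℝ) ≤ r ^ k := fun k => by
    simpa using pow_le_pow_left₀ zero_le_one hr1.le k
  have htR : ∀ (x : S) (t : Set S), (P x t).toReal ≤ 1 := by
    intro x t
    calc (P x t).toReal ≤ (1:ENNReal).toReal :=
          ENNReal.toReal_mono ENNReal.one_ne_top prob_le_one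
      _ = 1 := ENNReal.toReal_one
  -- measurability and bounds for h
  have hmb : ∀ n : ℕ, Measurable (h n) ∧ ∀ x, 0 ≤ h n x ∧ h n x ≤ 1 := by
    intro n
    induction n with
    | zero =>
      constructor
      · simpa [funext h0] using measurable_const (a := (0:ℝ))
      · intro x; rw [h0 x]; exact ⟨le_refl 0, zero_le_one⟩
    | succ k ih =>
      rcases Nat.eq_zero_or_pos k with hk | hk
      · subst hk
        constructor
        · have : h 1 = fun x => (P x C).toReal := funext h1
          rw [this]
          exact (Kernel.measurable_coe P hC).ennreal_toReal
        · intro x; rw [h1 x]; exact ⟨ENNReal.toReal_nonneg, htR x C⟩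
      · obtain ⟨ihm, ihb⟩ := ih
        have hib : ∀ x, Integrable (h k) (P x) := by
          intro x
          refine (integrable_const (1:ℝ)).mono' ihm.aestronglyMeasurable ?_
          refine Filter.Eventually.of_forall (fun y => ?_)
          rw [Real.norm_eq_abs, abs_le]
          exact ⟨by linarith [(ihb y).1], (ihb y).2⟩
        constructor
        · have heq : h (k+1) = fun x => ∫ y, Set.indicator Cᶜ (h k) y ∂ P x := by
            funext x
            rw [hrec k hk x, ← integral_indicator hC.compl]
          rw [heq]
          have hsm : StronglyMeasurable (Set.indicator Cᶜ (h k)) :=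
            (ihm.indicator hC.compl).stronglyMeasurable
          exact (MeasureTheory.StronglyMeasurable.integral_kernel_prod_right
            (f := fun (_ : S) y => Set.indicator Cᶜ (h k) y) (κ := P)
            (hsm.comp_measurable measurable_snd)).measurable
        · intro x
          rw [hrec k hk x]
          constructor
          · exact setIntegral_nonneg hC.compl (fun y _ => (ihb y).1)
          · have hle : ∫ y in Cᶜ, h k y ∂ P x ≤ ∫ y in Cᶜ, (1:ℝ) ∂ P x :=
              setIntegral_mono_on (hib x).integrableOn (integrable_const 1).integrableOn
                hC.compl (fun y _ => (ihb y).2)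
            have : ∫ y in Cᶜ, (1:ℝ) ∂ P x = (P x Cᶜ).toReal := by
              rw [setIntegral_const, smul_eq_mul, mul_one, measureReal_def]
            rw [this] at hle
            exact hle.trans (htR x Cᶜ)
  have hmeas : ∀ n, Measurable (h n) := fun n => (hmb n).1
  have h0le : ∀ n x, 0 ≤ h n x := fun n x => ((hmb n).2 x).1
  have hle1 : ∀ n x, h n x ≤ 1 := fun n x => ((hmb n).2 x).2
  have hint : ∀ (n : ℕ) (x : S), Integrable (h n) (P x) := by
    intro n x
    refine (integrable_const (1:ℝ)).mono' (hmeas n).aestronglyMeasurable ?_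
    refine Filter.Eventually.of_forall (fun y => ?_)
    rw [Real.norm_eq_abs, abs_le]
    exact ⟨by linarith [h0le n y], hle1 n y⟩
  -- splitting the sum
  have hsplit_sum : ∀ (φ : ℕ → ℝ) (n : ℕ) (g : ℕ → ℝ),
      ∑ m ∈ Finset.Icc 1 (n+1), φ m * g m
        = φ 1 * g 1 + ∑ m ∈ Finset.Icc 1 n, φ (m+1) * g (m+1) := by
    intro φ n g
    induction n with
    | zero => simp
    | succ k ih =>
      rw [Finset.sum_Icc_succ_top (by omega : 1 ≤ k + 1 + 1), ih,
        Finset.sum_Icc_succ_top (by omega : 1 ≤ k + 1)]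
      ring
  have hstep : ∀ (φ : ℕ → ℝ) (n : ℕ) (x : S),
      ∑ m ∈ Finset.Icc 1 (n+1), φ m * h m x
        = φ 1 * (P x C).toReal
          + ∫ y in Cᶜ, (∑ m ∈ Finset.Icc 1 n, φ (m+1) * h m y) ∂ P x := by
    intro φ n x
    rw [hsplit_sum φ n (fun m => h m x)]
    have e1 : ∫ y in Cᶜ, (∑ m ∈ Finset.Icc 1 n, φ (m+1) * h m y) ∂ P x
        = ∑ m ∈ Finset.Icc 1 n, φ (m+1) * ∫ y in Cᶜ, h m y ∂ P x := by
      rw [integral_finset_sum _ (fun m _ => ((hint m x).restrict).const_mul _)]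
      exact Finset.sum_congr rfl fun m _ => integral_const_mul _ _
    rw [e1, h1 x]
    congr 1
    exact Finset.sum_congr rfl fun m hm => by
      rw [← hrec m (Finset.mem_Icc.mp hm).1 x]
  -- drift facts
  have hPCr : ∀ x, (P x C).toReal + (P x Cᶜ).toReal = 1 := by
    intro x
    rw [← ENNReal.toReal_add (measure_ne_top _ _) (measure_ne_top _ _),
      measure_add_measure_compl hC, measure_univ, ENNReal.toReal_one]
  have hsetC : ∀ x, (P x C).toReal ≤ ∫ y in C, V y ∂ P x := by
    intro x
    have h2 : ∫ y in C, (1:ℝ) ∂ P x ≤ ∫ y in C, V y ∂ P x :=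
      setIntegral_mono_on (integrable_const 1).integrableOn (hVint x).integrableOn
        hC (fun y _ => hV1 y)
    rw [setIntegral_const, smul_eq_mul, mul_one] at h2
    exact h2
  have hintVcompl : ∀ x, ∫ y in Cᶜ, V y ∂ P x
      = ∫ y, V y ∂ P x - ∫ y in C, V y ∂ P x := by
    intro x
    have := integral_add_compl hC (hVint x)
    linarith
  have hkey_out : ∀ x ∉ C, r * ∫ y in Cᶜ, V y ∂ P x ≤ V x - r * (P x C).toReal := by
    intro x hx
    have h3 : r * ∫ y, V y ∂ P x ≤ V x := by
      calc r * ∫ y, V y ∂ P x ≤ r * (lam * V x) :=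
            mul_le_mul_of_nonneg_left (hdrift_out x hx) hr0.le
        _ = (lam * r) * V x := by ring
        _ = V x := by rw [hlr, one_mul]
    have h5 : r * (P x C).toReal ≤ r * ∫ y in C, V y ∂ P x :=
      mul_le_mul_of_nonneg_left (hsetC x) hr0.le
    rw [hintVcompl x, mul_sub]
    linarith
  have hkey_in : r * ∫ y in Cᶜ, V y ∂ P a ≤ r * K - r * (P a C).toReal := by
    have h3 : r * ∫ y, V y ∂ P a ≤ r * K :=
      mul_le_mul_of_nonneg_left (hdrift_in a ha) hr0.le
    have h5 : r * (P a C).toReal ≤ r * ∫ y in C, V y ∂ P a :=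
      mul_le_mul_of_nonneg_left (hsetC a) hr0.le
    rw [hintVcompl a, mul_sub]
    linarith
  have hK1 : (1:ℝ) ≤ K := by
    have h2 := hdrift_in a ha
    have h3 : (1:ℝ) ≤ ∫ y, V y ∂ P a := by
      have := integral_mono (integrable_const 1) (hVint a) hV1
      simpa using this
    linarith
  -- partial sums of h are ≤ 1
  have hsum1 : ∀ (n : ℕ) (x : S), ∑ m ∈ Finset.Icc 1 n, h m x ≤ 1 := by
    intro n
    induction n with
    | zero => intro x; simp
    | succ k ih =>
      intro x
      have e : ∑ m ∈ Finset.Icc 1 (k+1), h m x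
          = (P x C).toReal + ∫ y in Cᶜ, (∑ m ∈ Finset.Icc 1 k, h m y) ∂ P x := by
        simpa using hstep (fun _ => 1) k x
      rw [e]
      have hmono : ∫ y in Cᶜ, (∑ m ∈ Finset.Icc 1 k, h m y) ∂ P x ≤ (P x Cᶜ).toReal := by
        have h2 : ∫ y in Cᶜ, (∑ m ∈ Finset.Icc 1 k, h m y) ∂ P x
            ≤ ∫ y in Cᶜ, (1:ℝ) ∂ P x :=
          setIntegral_mono_on
            (integrable_finset_sum _ (fun m _ => (hint m x).restrict))
            (integrable_const 1).integrableOn hC.compl (fun y _ => ih y)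
        rw [setIntegral_const, smul_eq_mul, mul_one] at h2
        exact h2
      linarith [hPCr x]
  -- Lemma B': sum (r^m - 1) h m x ≤ V x - 1 outside C
  have hB' : ∀ n : ℕ, ∀ x ∉ C, ∑ m ∈ Finset.Icc 1 n, (r^m - 1) * h m x ≤ V x - 1 := by
    intro n
    induction n with
    | zero => intro x hx; simpa using (by linarith [hV1 x] : (0:ℝ) ≤ V x - 1)
    | succ k ih =>
      intro x hx
      have est := hstep (fun m => r ^ m - 1) k x
      beta_reduce at est
      rw [est, pow_one]
      have hub : ∀ y ∈ Cᶜ, ∑ m ∈ Finset.Icc 1 k, (r^(m+1) - 1) * h m y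
          ≤ r * (V y - 1) + (r - 1) := by
        intro y hy
        have e2 : ∑ m ∈ Finset.Icc 1 k, (r^(m+1) - 1) * h m y
            = r * (∑ m ∈ Finset.Icc 1 k, (r^m - 1) * h m y)
              + (r-1) * (∑ m ∈ Finset.Icc 1 k, h m y) := by
          rw [Finset.mul_sum, Finset.mul_sum, ← Finset.sum_add_distrib]
          exact Finset.sum_congr rfl fun m _ => by ring
        rw [e2]
        have h1' := ih y hy
        have h2' := hsum1 k y
        have h3' := mul_le_mul_of_nonneg_left h1' hr0.le
        have h4' := mul_le_mul_of_nonneg_left h2' (le_of_lt hrm1)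
        linarith
      have hmono : ∫ y in Cᶜ, (∑ m ∈ Finset.Icc 1 k, (r^(m+1) - 1) * h m y) ∂ P x
          ≤ ∫ y in Cᶜ, (r * (V y - 1) + (r - 1)) ∂ P x :=
        setIntegral_mono_on
          (integrable_finset_sum _ fun m _ => ((hint m x).restrict).const_mul _)
          ((((hVint x).integrableOn.sub (integrable_const 1).integrableOn).const_mul r).add
            (integrable_const (r-1)).integrableOn)
          hC.compl hub
      have hiV1 : IntegrableOn (fun y => V y - 1) Cᶜ (P x) :=
        (hVint x).integrableOn.sub (integrable_const 1).integrableOn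
      have hiV2 : IntegrableOn (fun y => r * (V y - 1)) Cᶜ (P x) := hiV1.const_mul r
      have heval : ∫ y in Cᶜ, (r * (V y - 1) + (r - 1)) ∂ P x
          = r * ((∫ y in Cᶜ, V y ∂ P x) - (P x Cᶜ).toReal) + (r-1) * (P x Cᶜ).toReal := by
        rw [integral_add hiV2 (integrable_const _),
          integral_const_mul,
          integral_sub (hVint x).integrableOn (integrable_const 1).integrableOn,
          setIntegral_const, setIntegral_const]
        simp [smul_eq_mul, measureReal_def]; ring
      rw [heval] at hmono
      have hko := hkey_out x hx
      have hpcr := hPCr x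
      linarith
  -- Lemma C': at the atom
  have hC' : ∀ n : ℕ, ∑ m ∈ Finset.Icc 1 n, (r^m - 1) * h m a ≤ r * K - 1 := by
    intro n
    cases n with
    | zero => simp; nlinarith
    | succ k =>
      have est := hstep (fun m => r ^ m - 1) k a
      beta_reduce at est
      rw [est, pow_one]
      have hub : ∀ y ∈ Cᶜ, ∑ m ∈ Finset.Icc 1 k, (r^(m+1) - 1) * h m y
          ≤ r * (V y - 1) + (r - 1) := by
        intro y hy
        have e2 : ∑ m ∈ Finset.Icc 1 k, (r^(m+1) - 1) * h m y
            = r * (∑ m ∈ Finset.Icc 1 k, (r^m - 1) * h m y)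
              + (r-1) * (∑ m ∈ Finset.Icc 1 k, h m y) := by
          rw [Finset.mul_sum, Finset.mul_sum, ← Finset.sum_add_distrib]
          exact Finset.sum_congr rfl fun m _ => by ring
        rw [e2]
        have h1' := hB' k y hy
        have h2' := hsum1 k y
        have h3' := mul_le_mul_of_nonneg_left h1' hr0.le
        have h4' := mul_le_mul_of_nonneg_left h2' (le_of_lt hrm1)
        linarith
      have hmono : ∫ y in Cᶜ, (∑ m ∈ Finset.Icc 1 k, (r^(m+1) - 1) * h m y) ∂ P a
          ≤ ∫ y in Cᶜ, (r * (V y - 1) + (r - 1)) ∂ P a :=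
        setIntegral_mono_on
          (integrable_finset_sum _ fun m _ => ((hint m a).restrict).const_mul _)
          ((((hVint a).integrableOn.sub (integrable_const 1).integrableOn).const_mul r).add
            (integrable_const (r-1)).integrableOn)
          hC.compl hub
      have hiV1 : IntegrableOn (fun y => V y - 1) Cᶜ (P a) :=
        (hVint a).integrableOn.sub (integrable_const 1).integrableOn
      have hiV2 : IntegrableOn (fun y => r * (V y - 1)) Cᶜ (P a) := hiV1.const_mul r
      have heval : ∫ y in Cᶜ, (r * (V y - 1) + (r - 1)) ∂ P a
          = r * ((∫ y in Cᶜ, V y ∂ P a) - (P a Cᶜ).toReal) + (r-1) * (P a Cᶜ).toReal := by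
        rw [integral_add hiV2 (integrable_const _),
          integral_const_mul,
          integral_sub (hVint a).integrableOn (integrable_const 1).integrableOn,
          setIntegral_const, setIntegral_const]
        simp [smul_eq_mul, measureReal_def]; ring
      rw [heval] at hmono
      have hpcr := hPCr a
      linarith [hkey_in]
  -- the sequence e m = ∑_{k<m} (r^k - 1)
  set e : ℕ → ℝ := fun m => ∑ k ∈ Finset.range m, (r^k - 1) with he
  have he_succ : ∀ m, e (m+1) = e m + (r^m - 1) := fun m => Finset.sum_range_succ _ m
  have he1 : e 1 = 0 := by simp [he]
  have he_nonneg : ∀ m, 0 ≤ e m :=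
    fun m => Finset.sum_nonneg fun k _ => by linarith [hpow1 k]
  -- Lemma B'': weighted version outside C
  have hB'' : ∀ n : ℕ, ∀ x ∉ C,
      ∑ m ∈ Finset.Icc 1 n, e m * h m x ≤ (V x - 1) / (r - 1) := by
    intro n
    induction n with
    | zero =>
      intro x hx
      simpa using div_nonneg (by linarith [hV1 x] : (0:ℝ) ≤ V x - 1) hrm1.le
    | succ k ih =>
      intro x hx
      have est := hstep e k x
      rw [est, he1, zero_mul, zero_add]
      have hub : ∀ y ∈ Cᶜ, ∑ m ∈ Finset.Icc 1 k, e (m+1) * h m y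
          ≤ (V y - 1) * (r / (r - 1)) := by
        intro y hy
        have e2 : ∑ m ∈ Finset.Icc 1 k, e (m+1) * h m y
            = (∑ m ∈ Finset.Icc 1 k, e m * h m y)
              + (∑ m ∈ Finset.Icc 1 k, (r^m - 1) * h m y) := by
          rw [← Finset.sum_add_distrib]
          exact Finset.sum_congr rfl fun m _ => by rw [he_succ m]; ring
        rw [e2]
        have h1' := ih y hy
        have h2' := hB' k y hy
        have e3 : (V y - 1) * (r / (r - 1)) = (V y - 1) / (r - 1) + (V y - 1) := by
          field_simp
          ring
        rw [e3]
        exact add_le_add h1' h2'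
      have hmono : ∫ y in Cᶜ, (∑ m ∈ Finset.Icc 1 k, e (m+1) * h m y) ∂ P x
          ≤ ∫ y in Cᶜ, ((V y - 1) * (r / (r - 1))) ∂ P x :=
        setIntegral_mono_on
          (integrable_finset_sum _ fun m _ => ((hint m x).restrict).const_mul _)
          (((hVint x).integrableOn.sub (integrable_const 1).integrableOn).mul_const _)
          hC.compl hub
      have hiV1 : IntegrableOn (fun y => V y - 1) Cᶜ (P x) :=
        (hVint x).integrableOn.sub (integrable_const 1).integrableOn
      have heval : ∫ y in Cᶜ, ((V y - 1) * (r / (r - 1))) ∂ P x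
          = ((∫ y in Cᶜ, V y ∂ P x) - (P x Cᶜ).toReal) * (r / (r - 1)) := by
        rw [integral_mul_const,
          integral_sub (hVint x).integrableOn (integrable_const 1).integrableOn,
          setIntegral_const]
        simp [smul_eq_mul, measureReal_def]
      rw [heval] at hmono
      refine hmono.trans ?_
      have hko := hkey_out x hx
      have hpcr := hPCr x
      rw [mul_div_assoc', div_le_div_iff₀ hrm1 hrm1]
      have hr' : r * (P x C).toReal + r * (P x Cᶜ).toReal = r := by
        calc r * (P x C).toReal + r * (P x Cᶜ).toReal
            = r * ((P x C).toReal + (P x Cᶜ).toReal) := by ring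
          _ = r := by rw [hpcr, mul_one]
      have hmain : (∫ y in Cᶜ, V y ∂ P x - (P x Cᶜ).toReal) * r ≤ V x - 1 := by
        linarith [hko, hr', hr1]
      linarith [mul_le_mul_of_nonneg_right hmain hrm1.le]
  -- Lemma C'': weighted version at the atom
  have hC'' : ∀ n : ℕ, ∑ m ∈ Finset.Icc 1 n, e m * h m a ≤ r * (K - 1) / (r - 1) := by
    intro n
    cases n with
    | zero =>
      simpa using div_nonneg (mul_nonneg hr0.le (by linarith : (0:ℝ) ≤ K - 1)) hrm1.le
    | succ k =>
      have est := hstep e k a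
      rw [est, he1, zero_mul, zero_add]
      have hub : ∀ y ∈ Cᶜ, ∑ m ∈ Finset.Icc 1 k, e (m+1) * h m y
          ≤ (V y - 1) * (r / (r - 1)) := by
        intro y hy
        have e2 : ∑ m ∈ Finset.Icc 1 k, e (m+1) * h m y
            = (∑ m ∈ Finset.Icc 1 k, e m * h m y)
              + (∑ m ∈ Finset.Icc 1 k, (r^m - 1) * h m y) := by
          rw [← Finset.sum_add_distrib]
          exact Finset.sum_congr rfl fun m _ => by rw [he_succ m]; ring
        rw [e2]
        have e3 : (V y - 1) * (r / (r - 1)) = (V y - 1) / (r - 1) + (V y - 1) := by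
          field_simp
          ring
        rw [e3]
        exact add_le_add (hB'' k y hy) (hB' k y hy)
      have hmono : ∫ y in Cᶜ, (∑ m ∈ Finset.Icc 1 k, e (m+1) * h m y) ∂ P a
          ≤ ∫ y in Cᶜ, ((V y - 1) * (r / (r - 1))) ∂ P a :=
        setIntegral_mono_on
          (integrable_finset_sum _ fun m _ => ((hint m a).restrict).const_mul _)
          (((hVint a).integrableOn.sub (integrable_const 1).integrableOn).mul_const _)
          hC.compl hub
      have heval : ∫ y in Cᶜ, ((V y - 1) * (r / (r - 1))) ∂ P a
          = ((∫ y in Cᶜ, V y ∂ P a) - (P a Cᶜ).toReal) * (r / (r - 1)) := by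
        rw [integral_mul_const,
          integral_sub (hVint a).integrableOn (integrable_const 1).integrableOn,
          setIntegral_const]
        simp [smul_eq_mul, measureReal_def]
      rw [heval] at hmono
      refine hmono.trans ?_
      have hpcr := hPCr a
      rw [mul_div_assoc', div_le_div_iff₀ hrm1 hrm1]
      have hr' : r * (P a C).toReal + r * (P a Cᶜ).toReal = r := by
        calc r * (P a C).toReal + r * (P a Cᶜ).toReal
            = r * ((P a C).toReal + (P a Cᶜ).toReal) := by ring
          _ = r := by rw [hpcr, mul_one]
      have hmain : (∫ y in Cᶜ, V y ∂ P a - (P a Cᶜ).toReal) * r ≤ r * (K - 1) := by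
        linarith [hkey_in, hr', hr1]
      linarith [mul_le_mul_of_nonneg_right hmain hrm1.le]
  -- algebraic identities for power sums
  set c : ℝ → ℕ → ℝ := fun t m => ∑ k ∈ Finset.Icc 1 m, ∑ j ∈ Finset.range (k-1), t ^ j
    with hc
  have key_w : ∀ (t : ℝ) (m : ℕ),
      (∑ k ∈ Finset.Icc 1 m, t ^ k) - t * m = t * (t - 1) * c t m := by
    intro t m
    induction m with
    | zero => simp [hc]
    | succ n ihm =>
      have e1 : c t (n+1) = c t n + ∑ j ∈ Finset.range n, t ^ j := by
        simp only [hc]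
        rw [Finset.sum_Icc_succ_top (Nat.le_add_left 1 n)]
        simp
      rw [Finset.sum_Icc_succ_top (Nat.le_add_left 1 n), e1]
      have geo : (t - 1) * ∑ j ∈ Finset.range n, t ^ j = t ^ n - 1 := by
        rw [mul_comm, geom_sum_mul]
      push_cast
      linear_combination ihm - t * geo
  have hc_mono : ∀ m, c s m ≤ c r m := by
    intro m
    simp only [hc]
    exact Finset.sum_le_sum fun k _ => Finset.sum_le_sum fun j _ =>
      pow_le_pow_left₀ hs0.le hsr j
  have hc_nonneg : ∀ m, 0 ≤ c s m := by
    intro m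
    simp only [hc]
    exact Finset.sum_nonneg fun k _ => Finset.sum_nonneg fun j _ => pow_nonneg hs0.le j
  have hcr : ∀ m, c r m = e m / (r - 1) := by
    intro m
    rw [eq_div_iff (ne_of_gt hrm1)]
    have e1 : c r m * (r - 1) = ∑ k ∈ Finset.Icc 1 m, (r ^ (k-1) - 1) := by
      simp only [hc]
      rw [Finset.sum_mul]
      exact Finset.sum_congr rfl fun k _ => geom_sum_mul r (k-1)
    rw [e1, ← Finset.Ico_add_one_right_eq_Icc, Finset.sum_Ico_eq_sum_range]
    simp only [Nat.add_sub_cancel, Nat.succ_sub_one, Nat.add_sub_cancel_left, he]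
  have hrange : ∀ (f : ℕ → ℝ), f 0 = 0 → ∀ n : ℕ,
      ∑ m ∈ Finset.range (n+1), f m = ∑ m ∈ Finset.Icc 1 n, f m := by
    intro f hf0 n
    rw [Finset.sum_range_succ', hf0, add_zero, ← Finset.Ico_add_one_right_eq_Icc,
      Finset.sum_Ico_eq_sum_range]
    exact Finset.sum_congr (by simp) fun i _ => by rw [Nat.add_comm]
  have hBern : ∀ m : ℕ, (m:ℝ) * (r - 1) ≤ r ^ m - 1 := by
    intro m
    have h2 := one_add_mul_le_pow (by linarith : (-2:ℝ) ≤ r - 1) m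
    have h3 : (1:ℝ) + (m:ℝ) * (r-1) ≤ r ^ m := by
      have e4 : (1 + (r - 1)) = r := by ring
      rwa [e4] at h2
    linarith
  -- partial sum bounds, summability
  have hrK1 : (0:ℝ) ≤ r * K - 1 := by nlinarith
  have hrKe : (0:ℝ) ≤ r * (K - 1) / (r - 1) :=
    div_nonneg (mul_nonneg hr0.le (by linarith)) hrm1.le
  have hPS1 : ∀ n : ℕ, ∑ m ∈ Finset.range n, h m a * (r ^ m - 1) ≤ r * K - 1 := by
    intro n
    cases n with
    | zero => simpa using hrK1
    | succ k =>
      have e1 := hrange (fun m => h m a * (r ^ m - 1)) (by simp [h0 a]) k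
      beta_reduce at e1
      rw [e1]
      calc ∑ m ∈ Finset.Icc 1 k, h m a * (r ^ m - 1)
          = ∑ m ∈ Finset.Icc 1 k, (r ^ m - 1) * h m a :=
            Finset.sum_congr rfl fun m _ => mul_comm _ _
        _ ≤ r * K - 1 := hC' k
  have hPS2 : ∀ n : ℕ, ∑ m ∈ Finset.range n, h m a * e m ≤ r * (K - 1) / (r - 1) := by
    intro n
    cases n with
    | zero => simpa using hrKe
    | succ k =>
      have e1 := hrange (fun m => h m a * e m) (by simp [h0 a]) k
      beta_reduce at e1
      rw [e1]
      calc ∑ m ∈ Finset.Icc 1 k, h m a * e m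
          = ∑ m ∈ Finset.Icc 1 k, e m * h m a :=
            Finset.sum_congr rfl fun m _ => mul_comm _ _
        _ ≤ r * (K - 1) / (r - 1) := hC'' k
  have hnn1 : ∀ m : ℕ, 0 ≤ h m a * (r ^ m - 1) :=
    fun m => mul_nonneg (h0le m a) (by linarith [hpow1 m])
  have Sum_rm : Summable (fun m : ℕ => h m a * (r ^ m - 1)) :=
    summable_of_sum_range_le hnn1 hPS1
  have hnn2 : ∀ m : ℕ, 0 ≤ h m a * e m :=
    fun m => mul_nonneg (h0le m a) (he_nonneg m)
  have Sum_e : Summable (fun m : ℕ => h m a * e m) :=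
    summable_of_sum_range_le hnn2 hPS2
  have Sum_m : Summable (fun m : ℕ => h m a * (m:ℝ)) := by
    refine Summable.of_nonneg_of_le
      (fun m => mul_nonneg (h0le m a) (Nat.cast_nonneg m)) (fun m => ?_)
      (Sum_rm.div_const (r-1))
    rw [le_div_iff₀ hrm1]
    calc h m a * (m:ℝ) * (r-1) = h m a * ((m:ℝ) * (r-1)) := by ring
      _ ≤ h m a * (r ^ m - 1) := mul_le_mul_of_nonneg_left (hBern m) (h0le m a)
  have hw_bound : ∀ m : ℕ, (∑ k ∈ Finset.Icc 1 m, s ^ k) ≤ e m + (r ^ m - 1) + m := by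
    intro m
    have h2 : ∑ k ∈ Finset.Icc 1 m, s ^ k ≤ ∑ k ∈ Finset.Icc 1 m, r ^ k :=
      Finset.sum_le_sum fun k _ => pow_le_pow_left₀ hs0.le hsr k
    have h3 : (∑ k ∈ Finset.Icc 1 m, (r ^ k - 1))
        = (∑ k ∈ Finset.Icc 1 m, r ^ k) - m := by
      rw [Finset.sum_sub_distrib, Finset.sum_const, Nat.card_Icc]
      simp
    have h5 := hrange (fun k => r ^ k - 1) (by simp) m
    beta_reduce at h5
    have h4 : (∑ k ∈ Finset.Icc 1 m, (r ^ k - 1)) = e m + (r ^ m - 1) := by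
      rw [← h5, Finset.sum_range_succ]
    linarith
  have Sum_w : Summable (fun m : ℕ => h m a * ∑ k ∈ Finset.Icc 1 m, s ^ k) := by
    have hbig : Summable
        (fun m : ℕ => h m a * e m + (h m a * (r ^ m - 1) + h m a * (m:ℝ))) :=
      Sum_e.add (Sum_rm.add Sum_m)
    refine Summable.of_nonneg_of_le
      (fun m => mul_nonneg (h0le m a)
        (Finset.sum_nonneg fun k _ => pow_nonneg hs0.le k)) (fun m => ?_) hbig
    calc h m a * ∑ k ∈ Finset.Icc 1 m, s ^ k
        ≤ h m a * (e m + (r ^ m - 1) + m) :=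
          mul_le_mul_of_nonneg_left (hw_bound m) (h0le m a)
      _ = h m a * e m + (h m a * (r ^ m - 1) + h m a * m) := by ring
  have Sum_cr : Summable (fun m : ℕ => h m a * c r m) := by
    have e1 : (fun m : ℕ => h m a * c r m) = fun m : ℕ => (h m a * e m) / (r - 1) := by
      funext m; rw [hcr m]; ring
    rw [e1]
    exact Sum_e.div_const _
  have Sum_cs : Summable (fun m : ℕ => h m a * c s m) :=
    Summable.of_nonneg_of_le (fun m => mul_nonneg (h0le m a) (hc_nonneg m))
      (fun m => mul_le_mul_of_nonneg_left (hc_mono m) (h0le m a)) Sum_cr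
  -- tsum bounds
  have hT4 : ∑' m : ℕ, h m a * c r m ≤ r * (K - 1) / (r - 1) ^ 2 := by
    refine Summable.tsum_le_of_sum_range_le Sum_cr (fun n => ?_)
    have e1 : ∑ m ∈ Finset.range n, h m a * c r m
        = (∑ m ∈ Finset.range n, h m a * e m) / (r - 1) := by
      rw [Finset.sum_div]
      exact Finset.sum_congr rfl fun m _ => by rw [hcr m]; ring
    rw [e1, show r * (K - 1) / (r - 1) ^ 2 = (r * (K - 1) / (r - 1)) / (r - 1) by
      rw [div_div, ← sq]]
    gcongr
    exact hPS2 n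
  have hT3 : ∑' m : ℕ, h m a * c s m ≤ r * (K - 1) / (r - 1) ^ 2 :=
    le_trans (Summable.tsum_le_tsum
      (fun m => mul_le_mul_of_nonneg_left (hc_mono m) (h0le m a)) Sum_cs Sum_cr) hT4
  -- final computation
  have hH1s : H₁ s a = ∑' m : ℕ, h m a * ∑ k ∈ Finset.Icc 1 m, s ^ k := hH₁ s a
  have hH11 : H₁ 1 a = ∑' m : ℕ, h m a * (m:ℝ) := by
    rw [hH₁ 1 a]
    exact tsum_congr fun m => by simp [Nat.card_Icc]
  have hnum : H₁ s a - s * H₁ 1 a = s * (s - 1) * ∑' m : ℕ, h m a * c s m := by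
    rw [hH1s, hH11, ← tsum_mul_left, ← Summable.tsum_sub Sum_w (Sum_m.mul_left s),
      ← tsum_mul_left]
    refine tsum_congr fun m => ?_
    linear_combination (h m a) * key_w s m
  rw [hnum]
  have heq2 : s * (s - 1) * (∑' m : ℕ, h m a * c s m) / (s - 1)
      = s * ∑' m : ℕ, h m a * c s m := by
    field_simp
  rw [heq2]
  have hident : r * (K - 1) / (r - 1) ^ 2 = lam * (K - 1) / (1 - lam) ^ 2 := by
    have hne1 : (1:ℝ) - lam ≠ 0 := by intro hcon; rw [sub_eq_zero] at hcon; linarith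
    rw [hrdef]
    rw [div_eq_div_iff (by positivity) (by positivity)]
    field_simp
  calc s * ∑' m : ℕ, h m a * c s m
      ≤ s * (r * (K - 1) / (r - 1) ^ 2) := mul_le_mul_of_nonneg_left hT3 hs0.le
    _ = s * lam * (K - 1) / (1 - lam) ^ 2 := by rw [hident]; ring
end

section
/- Fix b ∈ (0,1), and for α ≥ 1 define D(α) = (|1 + (b/(1−b))(1 − e^{iπ/(1+α)})| − 1)/|1 − e^{iπ/(1+α)}|. Then lim_{α→∞} α·D(α) = bπ/(2(1−b)²). -/
open Real Filter

theorem stmt_16 (b : ℝ) (hb0 : 0 < b) (hb1 : b < 1)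
    (D : ℝ → ℝ)
    (hD : ∀ α, D α = (‖(1 + ((b / (1 - b) : ℝ) : ℂ) *
        (1 - Complex.exp ((π / (1 + α)) * Complex.I)))‖ - 1) /
        ‖(1 - Complex.exp ((π / (1 + α)) * Complex.I))‖) :
    Tendsto (fun α => α * D α) atTop (nhds (b * π / (2 * (1 - b) ^ 2))) := by
  have hb : (0:ℝ) < 1 - b := by linarith
  set c : ℝ := b / (1 - b) with hc
  have hcpos : 0 < c := div_pos hb0 hb
  set K : ℝ := c * (1 + c) with hK
  have hKpos : 0 < K := by positivity
  have hb' : (1:ℝ) - b ≠ 0 := hb.ne'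
  have hKval : K = b / (1 - b) ^ 2 := by
    rw [hK, hc, eq_div_iff (pow_ne_zero 2 hb'), add_div' _ _ _ hb']
    field_simp
    ring
  set g : ℝ → ℝ := fun α =>
    K * (α * (2 * Real.sin (π / (2 * (1 + α))))) /
      (Real.sqrt (1 + K * (2 * Real.sin (π / (2 * (1 + α)))) ^ 2) + 1) with hg
  -- eventual equality
  have heq : ∀ᶠ α in atTop, α * D α = g α := by
    filter_upwards [eventually_ge_atTop (1:ℝ)] with α hα
    have hα1 : (0:ℝ) < 1 + α := by linarith
    set u : ℝ := π / (2 * (1 + α)) with hu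
    have hupos : 0 < u := by positivity
    have hule : u ≤ π / 4 := by
      rw [hu]
      apply div_le_div_of_nonneg_left pi_pos.le (by norm_num)
      linarith
    have hult : u < π := lt_of_le_of_lt hule (by linarith [pi_pos])
    have hsinu : 0 < Real.sin u := Real.sin_pos_of_pos_of_lt_pi hupos hult
    set s : ℝ := 2 * Real.sin u with hs
    have hspos : 0 < s := by positivity
    have hθ : π / (1 + α) = 2 * u := by rw [hu]; field_simp
    have hexp : Complex.exp ((↑(2*u) : ℂ) * Complex.I)
        = (↑(Real.cos (2*u)) : ℂ) + (↑(Real.sin (2*u)) : ℂ) * Complex.I := by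
      rw [Complex.exp_mul_I, Complex.ofReal_cos, Complex.ofReal_sin]
    have hB : ‖(1 - Complex.exp ((↑(2*u) : ℂ) * Complex.I))‖ = s := by
      rw [hexp]
      have h1 : (1:ℂ) - ((↑(Real.cos (2*u)) : ℂ) + (↑(Real.sin (2*u)) : ℂ) * Complex.I)
          = (↑(1 - Real.cos (2*u)) : ℂ) + (↑(-Real.sin (2*u)) : ℂ) * Complex.I := by
        push_cast; ring
      rw [h1, Complex.norm_add_mul_I]
      have h2 : (1 - Real.cos (2*u)) ^ 2 + (-Real.sin (2*u)) ^ 2 = s ^ 2 := by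
        rw [Real.sin_two_mul, Real.cos_two_mul, hs]
        linear_combination (4 * Real.cos u ^ 2 - 4) * Real.sin_sq_add_cos_sq u
      rw [h2, Real.sqrt_sq hspos.le]
    have hA : ‖(1 + (↑c : ℂ) * (1 - Complex.exp ((↑(2*u) : ℂ) * Complex.I)))‖
        = Real.sqrt (1 + K * s ^ 2) := by
      rw [hexp]
      have h1 : (1:ℂ) + (↑c : ℂ) * (1 - ((↑(Real.cos (2*u)) : ℂ) + (↑(Real.sin (2*u)) : ℂ) * Complex.I))
          = (↑(1 + c * (1 - Real.cos (2*u))) : ℂ) + (↑(-(c * Real.sin (2*u))) : ℂ) * Complex.I := by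
        push_cast; ring
      rw [h1, Complex.norm_add_mul_I]
      congr 1
      rw [Real.sin_two_mul, Real.cos_two_mul, hK, hs]
      linear_combination (-(4*c + 4*c^2 - 4*c^2*Real.cos u ^ 2)) * Real.sin_sq_add_cos_sq u
    have hcast : ((π / (1 + α) : ℝ) : ℂ) = (↑π / (1 + (α:ℂ))) := by push_cast; ring
    have hDval : D α = (Real.sqrt (1 + K * s ^ 2) - 1) / s := by
      rw [hD α, ← hcast, hθ, hA, hB]
    have hT : (0:ℝ) ≤ 1 + K * s ^ 2 := by positivity
    have hsq : Real.sqrt (1 + K * s ^ 2) ^ 2 = 1 + K * s ^ 2 := Real.sq_sqrt hT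
    have hsqrt_pos : 0 < Real.sqrt (1 + K * s ^ 2) + 1 := by positivity
    rw [hDval, hg]
    show α * ((Real.sqrt (1 + K * s ^ 2) - 1) / s)
        = K * (α * s) / (Real.sqrt (1 + K * s ^ 2) + 1)
    have key : (Real.sqrt (1 + K * s ^ 2) - 1) / s
        = K * s / (Real.sqrt (1 + K * s ^ 2) + 1) := by
      rw [div_eq_div_iff hspos.ne' hsqrt_pos.ne']
      linear_combination hsq
    rw [key]
    ring
  -- the limit of g
  have hslope : Tendsto (fun x : ℝ => Real.sin x / x) (nhdsWithin 0 {0}ᶜ) (nhds 1) := by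
    have h := (Real.hasDerivAt_sin 0)
    rw [hasDerivAt_iff_tendsto_slope] at h
    simpa [slope_fun_def, Real.sin_zero, Real.cos_zero, div_eq_inv_mul] using h
  have hatop : Tendsto (fun α : ℝ => 1 + α) atTop atTop :=
    tendsto_atTop_add_const_left _ 1 tendsto_id
  have hinv : Tendsto (fun α : ℝ => (1 + α)⁻¹) atTop (nhds 0) :=
    tendsto_inv_atTop_zero.comp hatop
  have hu0 : Tendsto (fun α : ℝ => π / (2 * (1 + α))) atTop (nhds 0) := by
    have hrw : ∀ α : ℝ, π / (2 * (1 + α)) = (π / 2) * (1 + α)⁻¹ := by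
      intro α
      rw [div_mul_eq_div_div, div_eq_mul_inv]
    simp only [hrw]
    simpa using hinv.const_mul (π / 2)
  have hu_ne : Tendsto (fun α : ℝ => π / (2 * (1 + α))) atTop (nhdsWithin 0 {0}ᶜ) := by
    refine tendsto_nhdsWithin_iff.mpr ⟨hu0, ?_⟩
    filter_upwards [eventually_gt_atTop (0:ℝ)] with α hα
    have : 0 < π / (2 * (1 + α)) := by positivity
    simpa using this.ne'
  have hsin_div : Tendsto (fun α : ℝ => Real.sin (π / (2 * (1 + α))) / (π / (2 * (1 + α))))
      atTop (nhds 1) := hslope.comp hu_ne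
  have h2au : Tendsto (fun α : ℝ => 2 * α * (π / (2 * (1 + α)))) atTop (nhds π) := by
    have hev : ∀ᶠ α : ℝ in atTop, π * (1 - (1 + α)⁻¹) = 2 * α * (π / (2 * (1 + α))) := by
      filter_upwards [eventually_gt_atTop (0:ℝ)] with α hα
      have h1 : (1 + α) ≠ 0 := by positivity
      field_simp
      ring
    have : Tendsto (fun α : ℝ => π * (1 - (1 + α)⁻¹)) atTop (nhds π) := by
      have := (((tendsto_const_nhds : Tendsto (fun _ : ℝ => (1:ℝ)) atTop (nhds 1)).sub hinv)).const_mul π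
      simpa using this
    exact this.congr' hev
  have h_as : Tendsto (fun α : ℝ => α * (2 * Real.sin (π / (2 * (1 + α))))) atTop (nhds π) := by
    have hmul := hsin_div.mul h2au
    rw [one_mul] at hmul
    refine hmul.congr' ?_
    filter_upwards [eventually_gt_atTop (0:ℝ)] with α hα
    have h1 : π / (2 * (1 + α)) ≠ 0 := by positivity
    field_simp
  have hsinv : Tendsto (fun α : ℝ => Real.sin (π / (2 * (1 + α)))) atTop (nhds 0) := by
    have := (Real.continuous_sin.tendsto 0).comp hu0
    rwa [Real.sin_zero] at this
  have hden : Tendsto (fun α : ℝ =>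
      Real.sqrt (1 + K * (2 * Real.sin (π / (2 * (1 + α)))) ^ 2) + 1) atTop (nhds 2) := by
    have h1 : Tendsto (fun α : ℝ => 1 + K * (2 * Real.sin (π / (2 * (1 + α)))) ^ 2)
        atTop (nhds 1) := by
      have := (((hsinv.const_mul 2).pow 2).const_mul K).const_add 1
      simpa using this
    have h2 := (Real.continuous_sqrt.tendsto 1).comp h1
    have h3 := h2.add (tendsto_const_nhds : Tendsto (fun _ : ℝ => (1:ℝ)) atTop (nhds 1))
    simp only [Real.sqrt_one] at h3
    norm_num at h3
    convert h3 using 2 <;> norm_num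
  have hglim : Tendsto g atTop (nhds (b * π / (2 * (1 - b) ^ 2))) := by
    have h4 := (h_as.const_mul K).div hden (by norm_num)
    have hval : K * π / 2 = b * π / (2 * (1 - b) ^ 2) := by
      rw [hKval]; field_simp
    rw [hg]
    rw [← hval]; exact h4
  have heq' : g =ᶠ[atTop] (fun α => α * D α) := heq.mono fun α h => h.symm
  exact hglim.congr' heq'
end

section
/- For b ∈ (0,1) and α ≥ 1, D(α) = (sqrt((1−b)² + 4b sin²(π/(2(1+α)))) − (1−b))/(2(1−b) sin(π/(2(1+α)))) satisfies D(α) ≥ b/((1−b)(1+α)). -/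
open Real

theorem stmt_17 (b α : ℝ) (hb0 : 0 < b) (hb1 : b < 1) (hα : 1 ≤ α) :
    b / ((1 - b) * (1 + α)) ≤
      (Real.sqrt ((1 - b) ^ 2 + 4 * b * Real.sin (π / (2 * (1 + α))) ^ 2) - (1 - b)) /
        (2 * (1 - b) * Real.sin (π / (2 * (1 + α)))) := by
  have hπ : 0 < π := Real.pi_pos
  set A : ℝ := 1 + α with hA
  have hA2 : (2 : ℝ) ≤ A := by simp [hA]; linarith
  have hA0 : (0 : ℝ) < A := by linarith
  set s : ℝ := Real.sin (π / (2 * A)) with hs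
  have hx0 : 0 < π / (2 * A) := by positivity
  have hxπ : π / (2 * A) ≤ π / 2 := by
    apply div_le_div_of_nonneg_left hπ.le (by norm_num)
    linarith
  have hs0 : 0 < s := Real.sin_pos_of_pos_of_lt_pi hx0 (lt_of_le_of_lt hxπ (by linarith))
  have hs1 : s ≤ 1 := Real.sin_le_one _
  have hsA : 1 ≤ A * s := by
    have h := Real.mul_le_sin hx0.le hxπ
    have heq : 2 / π * (π / (2 * A)) = 1 / A := by
      field_simp
    rw [heq, ← hs] at h
    calc (1 : ℝ) = A * (1 / A) := by field_simp
    _ ≤ A * s := mul_le_mul_of_nonneg_left h hA0.le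
  have hc : 0 < 1 - b := by linarith
  set X : ℝ := (1 - b) ^ 2 + 4 * b * s ^ 2 with hX
  have hX0 : (0 : ℝ) ≤ X := by positivity
  have key : A * (1 - b) + 2 * b * s ≤ A * Real.sqrt X := by
    have h1 : A * Real.sqrt X = Real.sqrt (A ^ 2 * X) := by
      rw [Real.sqrt_mul (by positivity), Real.sqrt_sq hA0.le]
    rw [h1, Real.le_sqrt (by positivity) (by positivity)]
    have h2 : A * (1 - b) + b * s ≤ A * (A * s) := by nlinarith
    nlinarith [mul_le_mul_of_nonneg_right (mul_le_mul_of_nonneg_right h2 hs0.le) hb0.le]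
  rw [div_le_div_iff₀ (by positivity) (by positivity)]
  nlinarith [mul_le_mul_of_nonneg_right key hc.le, Real.sqrt_nonneg X]
end
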